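/- arXiv:1607.07036 — 8 statements merged into one kernel-verified Lean document; each statement's English description precedes it below -/
import Mathlib

section
/- Let (X, ▷) be a finite rack with associated permutations f_y (f_y(x) = x ▷ y), and let S ⊆ X be a subrack, i.e., z ▷ y ∈ S for all y, z ∈ S. For T ⊆ X define the out-degree d_T⁺(v) := |{w ∈ X : w ≠ v ∧ ∃ i ∈ T, f_i(v) = w}|, and let r_S be the relation r_S(u, v) := (u ≠ v ∧ ∃ i ∈ S, f_i(u) = v). If u, v ∈ X are related by the equivalence relation generated by r_S (i.e., lie in the same component of the graph G_S), then d_S⁺(u) = d_S⁺(v). -/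
/-- A binary operation `op` on `X` is a rack operation if every right
translation `x ↦ op x y` is a bijection and the self-distributivity law holds. -/
def IsRack {X : Type*} (op : X → X → X) : Prop :=
  (∀ y, Function.Bijective fun x => op x y) ∧
    ∀ x y z, op (op x y) z = op (op x z) (op y z)

lemma edge_ncard {X : Type*} [Finite X] (op : X → X → X) (hrack : IsRack op)
    (S : Set X) (hS : ∀ y ∈ S, ∀ z ∈ S, op z y ∈ S)
    (u v : X) (i : X) (hi : i ∈ S) (hiv : op u i = v) :
    Set.ncard {w | w ≠ u ∧ ∃ j ∈ S, op u j = w} =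
      Set.ncard {w | w ≠ v ∧ ∃ j ∈ S, op v j = w} := by
  obtain ⟨hbij, hdist⟩ := hrack
  have hinj : Function.Injective fun x => op x i := (hbij i).1
  -- the map j ↦ op j i is a bijection of S
  have hmaps : Set.MapsTo (fun x => op x i) S S := fun j hj => hS i hi j hj
  have hsurjS : Set.SurjOn (fun x => op x i) S S := by
    have hfin : S.Finite := Set.toFinite S
    have := (Set.Finite.injOn_iff_bijOn_of_mapsTo hfin hmaps).mp (hinj.injOn)
    exact this.surjOn
  have hset : {w | w ≠ v ∧ ∃ j ∈ S, op v j = w} =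
      (fun x => op x i) '' {w | w ≠ u ∧ ∃ j ∈ S, op u j = w} := by
    ext w
    constructor
    · rintro ⟨hwv, j', hj', rfl⟩
      obtain ⟨j, hj, hji⟩ := hsurjS hj'
      refine ⟨op u j, ⟨?_, j, hj, rfl⟩, ?_⟩
      · intro h
        apply hwv
        simp only at hji h ⊢
        rw [← hji, ← hiv, ← hdist, h]
      · simp only at hji ⊢
        rw [hdist, hiv, hji]
    · rintro ⟨x, ⟨hxu, j, hj, rfl⟩, rfl⟩
      refine ⟨?_, op j i, hS i hi j hj, ?_⟩
      · intro h
        exact hxu (hinj (by simpa [hiv] using h))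
      · simp only
        rw [hdist, hiv]
  rw [hset, Set.ncard_image_of_injective _ hinj]

/-- Let `(X, op)` be a finite rack and `S ⊆ X` a subrack (closed under `op`).
If `u` and `v` lie in the same component of the graph `G_S` (i.e. are related
by the equivalence relation generated by its edge relation), then they have the
same out-degree with respect to `S`. -/
theorem statement6 {X : Type*} [Finite X] (op : X → X → X) (hrack : IsRack op)
    (S : Set X) (hS : ∀ y ∈ S, ∀ z ∈ S, op z y ∈ S)
    (u v : X)
    (huv : Relation.EqvGen (fun a b => a ≠ b ∧ ∃ i ∈ S, op a i = b) u v) :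
    Set.ncard {w | w ≠ u ∧ ∃ i ∈ S, op u i = w} =
      Set.ncard {w | w ≠ v ∧ ∃ i ∈ S, op v i = w} := by
  induction huv with
  | rel a b h =>
    obtain ⟨_, i, hi, hab⟩ := h
    exact edge_ncard op hrack S hS a b i hi hab
  | refl a => rfl
  | symm a b _ ih => exact ih.symm
  | trans a b c _ _ ih1 ih2 => exact ih1.trans ih2
end

section
/- Let V be a finite set and let r, s₁, s₂ be relations on V. Writing cp(t) for the number of equivalence classes of the equivalence relation generated by a relation t on V, one has cp(r) + cp(r ⊔ s₁ ⊔ s₂) ≥ cp(r ⊔ s₁) + cp(r ⊔ s₂); equivalently, cp(r) − cp(r ⊔ s₂) ≥ cp(r ⊔ s₁) − cp(r ⊔ s₁ ⊔ s₂). -/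
open Relation

section Aux

variable {V : Type*} [Finite V]

private lemma cp_mono {t t' : V → V → Prop} (h : ∀ a b, t a b → t' a b) :
    Nat.card (Quot t') ≤ Nat.card (Quot t) := by
  apply Nat.card_le_card_of_surjective (Quot.map id h)
  intro q
  induction q using Quot.ind with
  | _ x => exact ⟨Quot.mk t x, rfl⟩

/-- characterization of EqvGen of t ⊔ single edge (a,b) -/
private lemma eqvGen_sup_single {t : V → V → Prop} {a b x y : V}
    (h : EqvGen (t ⊔ fun u v => (u, v) = (a, b)) x y) :
    EqvGen t x y ∨ (EqvGen t x a ∧ EqvGen t b y) ∨ (EqvGen t x b ∧ EqvGen t a y) := by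
  induction h with
  | rel u v huv =>
    rcases huv with h | h
    · exact Or.inl (EqvGen.rel _ _ h)
    · obtain ⟨rfl, rfl⟩ := Prod.mk.injEq .. ▸ h
      exact Or.inr (Or.inl ⟨EqvGen.refl _, EqvGen.refl _⟩)
  | refl u => exact Or.inl (EqvGen.refl u)
  | symm u v _ ih =>
    rcases ih with h | ⟨h1, h2⟩ | ⟨h1, h2⟩
    · exact Or.inl h.symm
    · exact Or.inr (Or.inr ⟨h2.symm, h1.symm⟩)
    · exact Or.inr (Or.inl ⟨h2.symm, h1.symm⟩)
  | trans u v w _ _ ih1 ih2 =>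
    rcases ih1 with h | ⟨h1, h2⟩ | ⟨h1, h2⟩ <;>
      rcases ih2 with g | ⟨g1, g2⟩ | ⟨g1, g2⟩
    · exact Or.inl (h.trans _ _ _ g)
    · exact Or.inr (Or.inl ⟨h.trans _ _ _ g1, g2⟩)
    · exact Or.inr (Or.inr ⟨h.trans _ _ _ g1, g2⟩)
    · exact Or.inr (Or.inl ⟨h1, h2.trans _ _ _ g⟩)
    · exact Or.inr (Or.inl ⟨h1, g2⟩)
    · exact Or.inl ((h1.trans _ _ _ g2))
    · exact Or.inr (Or.inr ⟨h1, h2.trans _ _ _ g⟩)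
    · exact Or.inl (h1.trans _ _ _ g2)
    · exact Or.inr (Or.inr ⟨h1, g2⟩)

/-- adding one edge decreases the number of components by at most one -/
private lemma cp_le_add_one (t : V → V → Prop) (a b : V) :
    Nat.card (Quot t) ≤ Nat.card (Quot (t ⊔ fun u v => (u, v) = (a, b))) + 1 := by
  classical
  set e : V → V → Prop := fun u v => (u, v) = (a, b) with he
  have hle : ∀ u v, t u v → (t ⊔ e) u v := fun u v h => Or.inl h
  let f : Quot t → Quot (t ⊔ e) := Quot.map id hle
  let g : Quot t → Option (Quot (t ⊔ e)) := fun q =>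
    if q = Quot.mk t b then none else some (f q)
  have hg : Function.Injective g := by
    intro q₁ q₂ hq
    induction q₁ using Quot.ind with
    | _ x =>
    induction q₂ using Quot.ind with
    | _ y =>
    simp only [g] at hq
    by_cases h1 : Quot.mk t x = Quot.mk t b <;> by_cases h2 : Quot.mk t y = Quot.mk t b
    · exact h1.trans h2.symm
    · rw [if_pos h1, if_neg h2] at hq; exact absurd hq (by simp)
    · rw [if_neg h1, if_pos h2] at hq; exact absurd hq (by simp)
    · rw [if_neg h1, if_neg h2] at hq
      simp only [Option.some.injEq] at hq
      have hq' : Quot.mk (t ⊔ e) x = Quot.mk (t ⊔ e) y := hq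
      rw [Quot.eq] at hq' ⊢
      rcases eqvGen_sup_single hq' with h | ⟨hxa, hby⟩ | ⟨hxb, hay⟩
      · exact h
      · exact absurd (Quot.eqvGen_sound hby.symm) h2
      · exact absurd (Quot.eqvGen_sound hxb) h1
  haveI : Fintype (Quot (t ⊔ e)) := Fintype.ofFinite _
  calc Nat.card (Quot t) ≤ Nat.card (Option (Quot (t ⊔ e))) :=
        Nat.card_le_card_of_injective g hg
    _ = Nat.card (Quot (t ⊔ e)) + 1 := by
        simp [Nat.card_eq_fintype_card]

/-- adding an edge inside a component does not change the number of components -/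
private lemma cp_eq_of_rel {t e : V → V → Prop} (h : ∀ u v, e u v → EqvGen t u v) :
    Nat.card (Quot (t ⊔ e)) = Nat.card (Quot t) := by
  have hle : ∀ u v, t u v → (t ⊔ e) u v := fun u v h => Or.inl h
  refine Nat.card_congr (⟨(Quot.map id hle : Quot t → Quot (t ⊔ e)),
    (Quot.lift (Quot.mk t) (fun u v huv => ?_) : Quot (t ⊔ e) → Quot t),
    fun q => ?_, fun q => ?_⟩ : Quot t ≃ Quot (t ⊔ e)).symm
  · rcases huv with h' | h'
    · exact Quot.sound h'
    · exact Quot.eqvGen_sound (h _ _ h')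
  · induction q using Quot.ind with
    | _ x => rfl
  · induction q using Quot.ind with
    | _ x => rfl

/-- adding an edge between distinct components strictly decreases the count -/
private lemma cp_lt_of_not_rel {t : V → V → Prop} {a b : V} (h : ¬ EqvGen t a b) :
    Nat.card (Quot (t ⊔ fun u v => (u, v) = (a, b))) < Nat.card (Quot t) := by
  classical
  set e : V → V → Prop := fun u v => (u, v) = (a, b) with he
  have : Fintype (Quot t) := Fintype.ofFinite _
  have : Fintype (Quot (t ⊔ e)) := Fintype.ofFinite _
  rw [Nat.card_eq_fintype_card, Nat.card_eq_fintype_card]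
  have hle : ∀ u v, t u v → (t ⊔ e) u v := fun u v h => Or.inl h
  apply Fintype.card_lt_of_surjective_not_injective
    (Quot.map id hle : Quot t → Quot (t ⊔ e))
  · intro q
    induction q using Quot.ind with
    | _ x => exact ⟨Quot.mk t x, rfl⟩
  · intro hinj
    apply h
    rw [← Quot.eq]
    exact hinj (by exact Quot.sound (Or.inr rfl))

/-- single-edge submodularity -/
private lemma single_edge {A B : V → V → Prop} (hAB : ∀ u v, A u v → B u v) (a b : V) :
    Nat.card (Quot (A ⊔ fun u v => (u, v) = (a, b))) + Nat.card (Quot B) ≤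
      Nat.card (Quot A) + Nat.card (Quot (B ⊔ fun u v => (u, v) = (a, b))) := by
  by_cases hc : EqvGen B a b
  · have h1 : Nat.card (Quot (B ⊔ fun u v => (u, v) = (a, b))) = Nat.card (Quot B) :=
      cp_eq_of_rel (fun u v huv => by
        obtain ⟨rfl, rfl⟩ := Prod.mk.injEq .. ▸ huv; exact hc)
    have h2 : Nat.card (Quot (A ⊔ fun u v => (u, v) = (a, b))) ≤ Nat.card (Quot A) :=
      cp_mono (fun u v h => Or.inl h)
    omega
  · have hA : ¬ EqvGen A a b := fun h => hc (h.mono hAB)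
    have h1 := cp_lt_of_not_rel hA
    have h2 := cp_le_add_one B a b
    omega

private def relOf (S : Finset (V × V)) : V → V → Prop := fun u v => (u, v) ∈ S

private lemma key (r s₁ : V → V → Prop) (S : Finset (V × V)) :
    Nat.card (Quot (r ⊔ s₁)) + Nat.card (Quot (r ⊔ relOf S)) ≤
      Nat.card (Quot r) + Nat.card (Quot (r ⊔ s₁ ⊔ relOf S)) := by
  classical
  induction S using Finset.induction_on with
  | empty =>
    have h1 : r ⊔ relOf (∅ : Finset (V × V)) = r := by
      funext u v; simp only [Pi.sup_apply, sup_Prop_eq]; simp [relOf]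
    have h2 : r ⊔ s₁ ⊔ relOf (∅ : Finset (V × V)) = r ⊔ s₁ := by
      funext u v; simp only [Pi.sup_apply, sup_Prop_eq]; simp [relOf]
    rw [h1, h2]; omega
  | @insert p S hp ih =>
    obtain ⟨a, b⟩ := p
    have hins : ∀ (q : V → V → Prop),
        q ⊔ relOf (insert (a, b) S) = (q ⊔ relOf S) ⊔ fun u v => (u, v) = (a, b) := by
      intro q; funext u v
      simp only [relOf, Finset.mem_insert, Pi.sup_apply, sup_Prop_eq]
      apply propext; tauto
    rw [hins r, hins (r ⊔ s₁)]
    have := single_edge (A := r ⊔ relOf S) (B := r ⊔ s₁ ⊔ relOf S)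
      (fun u v h => by rcases h with h | h; exact Or.inl (Or.inl h); exact Or.inr h) a b
    omega

end Aux

/-- Submodularity of the number of components: for relations (edge sets)
`r, s₁, s₂` on a finite vertex set `V`, writing `cp t = Nat.card (Quot t)` for
the number of equivalence classes of the equivalence relation generated by `t`,
we have `cp (r ⊔ s₁) + cp (r ⊔ s₂) ≤ cp r + cp (r ⊔ s₁ ⊔ s₂)`, i.e.
`cp r - cp (r ⊔ s₂) ≥ cp (r ⊔ s₁) - cp (r ⊔ s₁ ⊔ s₂)`. -/
theorem statement7 {V : Type*} [Finite V] (r s₁ s₂ : V → V → Prop) :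
    Nat.card (Quot (r ⊔ s₁)) + Nat.card (Quot (r ⊔ s₂)) ≤
      Nat.card (Quot r) + Nat.card (Quot (r ⊔ s₁ ⊔ s₂)) := by
  classical
  have : Fintype V := Fintype.ofFinite _
  have hs : s₂ = relOf {p : V × V | s₂ p.1 p.2}.toFinset := by
    funext u v; simp [relOf]
  rw [hs]
  exact key r s₁ _
end

section
/- Let V be a finite set, let r and s be relations on V, and let u, v ∈ V; let e be the relation on V holding exactly for the pair (u, v). Write cp(t) for the number of equivalence classes of the equivalence relation generated by a relation t, and say that an equivalence class C of the equivalence relation generated by r is merged by a relation t if there exist x ∈ C and y ∉ C with t(x, y) or t(y, x); let M(r, t) denote the set of such classes. If cp(r ⊔ s ⊔ e) = cp(r ⊔ s), then M(r, s ⊔ e) = M(r, s). -/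
/-- The set of components (equivalence classes of the equivalence relation
generated by `r`) merged by the edge relation `t`: those classes `C` having an
edge of `t` with exactly one endpoint in `C`. -/
def mergedComponents {V : Type*} (r t : V → V → Prop) : Set (Set V) :=
  {C | (∃ a, C = {b | Relation.EqvGen r a b}) ∧
    ∃ x ∈ C, ∃ y, y ∉ C ∧ (t x y ∨ t y x)}

lemma sup_apply_iff {V : Type*} (r s : V → V → Prop) (a b : V) :
    (r ⊔ s) a b ↔ r a b ∨ s a b := Iff.rfl

lemma chain_lemma {V : Type*} (r s : V → V → Prop) (a : V)
    {x y : V} (hxy : Relation.EqvGen (r ⊔ s) x y) :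
    (Relation.EqvGen r a x ↔ Relation.EqvGen r a y) ∨
      (∃ p, Relation.EqvGen r a p ∧ ∃ q, ¬ Relation.EqvGen r a q ∧ (s p q ∨ s q p)) := by
  induction hxy with
  | rel x y hr =>
    rcases hr with hr | hs
    · left
      constructor
      · intro hx; exact hx.trans _ _ _ (Relation.EqvGen.rel _ _ hr)
      · intro hy; exact hy.trans _ _ _ ((Relation.EqvGen.rel _ _ hr).symm _ _)
    · by_cases hx : Relation.EqvGen r a x <;> by_cases hy : Relation.EqvGen r a y
      · left; exact iff_of_true hx hy
      · right; exact ⟨x, hx, y, hy, Or.inl hs⟩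
      · right; exact ⟨y, hy, x, hx, Or.inr hs⟩
      · left; exact iff_of_false hx hy
  | refl x => left; rfl
  | symm x y _ ih =>
    rcases ih with ih | ih
    · left; exact ih.symm
    · right; exact ih
  | trans x y z _ _ ih1 ih2 =>
    rcases ih1 with ih1 | ih1
    · rcases ih2 with ih2 | ih2
      · left; exact ih1.trans ih2
      · right; exact ih2
    · right; exact ih1

/-- If adding the single edge `e = (u, v)` to `r ⊔ s` does not change the number
of components, then the components of `r` merged by `s ⊔ e` are exactly those
merged by `s`. -/
theorem statement8 {V : Type*} [Finite V] (r s : V → V → Prop) (u v : V)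
    (e : V → V → Prop) (he : ∀ a b, e a b ↔ a = u ∧ b = v)
    (h : Nat.card (Quot (r ⊔ s ⊔ e)) = Nat.card (Quot (r ⊔ s))) :
    mergedComponents r (s ⊔ e) = mergedComponents r s := by
  -- The natural surjection Quot (r ⊔ s) → Quot (r ⊔ s ⊔ e)
  have huv : Relation.EqvGen (r ⊔ s) u v := by
    let f : Quot (r ⊔ s) → Quot (r ⊔ s ⊔ e) :=
      Quot.lift (Quot.mk _) (fun a b hab => Quot.sound (Or.inl hab))
    have hsurj : Function.Surjective f := by
      intro q
      refine Quot.inductionOn q (fun x => ⟨Quot.mk _ x, rfl⟩)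
    have hbij : Function.Bijective f := by
      rw [Nat.bijective_iff_surjective_and_card]
      exact ⟨hsurj, h.symm⟩
    have : f (Quot.mk _ u) = f (Quot.mk _ v) := by
      show Quot.mk (r ⊔ s ⊔ e) u = Quot.mk (r ⊔ s ⊔ e) v
      exact Quot.sound (Or.inr ((he u v).mpr ⟨rfl, rfl⟩))
    have h2 : Quot.mk (r ⊔ s) u = Quot.mk (r ⊔ s) v := hbij.injective this
    exact (Quot.eq.mp h2)
  ext C
  constructor
  · rintro ⟨⟨a, rfl⟩, x, hx, y, hy, hxy⟩
    refine ⟨⟨a, rfl⟩, ?_⟩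
    have key : ∀ p q : V, Relation.EqvGen r a p → ¬ Relation.EqvGen r a q →
        Relation.EqvGen (r ⊔ s) p q →
        ∃ x ∈ {b | Relation.EqvGen r a b}, ∃ y, y ∉ {b | Relation.EqvGen r a b} ∧ (s x y ∨ s y x) := by
      intro p q hp hq hpq
      rcases chain_lemma r s a hpq with hiff | ⟨p', hp', q', hq', hs⟩
      · exact absurd (hiff.mp hp) hq
      · exact ⟨p', hp', q', hq', hs⟩
    rcases hxy with (hs | hecase) | (hs | hecase)
    · exact ⟨x, hx, y, hy, Or.inl hs⟩
    · rcases (he x y).mp hecase with ⟨rfl, rfl⟩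
      exact key x y hx hy huv
    · exact ⟨x, hx, y, hy, Or.inr hs⟩
    · rcases (he y x).mp hecase with ⟨rfl, rfl⟩
      exact key x y hx hy (huv.symm _ _)
  · rintro ⟨hC, x, hx, y, hy, hxy⟩
    exact ⟨hC, x, hx, y, hy, hxy.imp Or.inl Or.inl⟩
end

section
/- Let (X, ▷) be a finite rack with associated permutations f_y (f_y(x) = x ▷ y), and let Δ be a natural number. Define d⁺(v) := |{w ∈ X : w ≠ v ∧ ∃ y ∈ X, f_y(v) = w}|, and set S_{≤Δ} := {v ∈ X : d⁺(v) ≤ Δ} and S_{>Δ} := {v ∈ X : d⁺(v) > Δ}. Then both S_{≤Δ} and S_{>Δ} are subracks of (X, ▷): for all y, z ∈ S_{≤Δ} one has z ▷ y ∈ S_{≤Δ}, and for all y, z ∈ S_{>Δ} one has z ▷ y ∈ S_{>Δ}. -/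
theorem deg_inv {X : Type*} (op : X → X → X) (hrack : IsRack op)
    (d : X → ℕ)
    (hd : ∀ v, d v = Set.ncard {w | w ≠ v ∧ ∃ y : X, op v y = w}) (y z : X) :
    d (op z y) = d z := by
  obtain ⟨hbij, hdist⟩ := hrack
  rw [hd, hd]
  have himg : {w | w ≠ op z y ∧ ∃ u : X, op (op z y) u = w}
      = (fun w => op w y) '' {w | w ≠ z ∧ ∃ u : X, op z u = w} := by
    ext w
    constructor
    · rintro ⟨hne, u', rfl⟩
      obtain ⟨u, rfl⟩ := (hbij y).2 u'
      refine ⟨op z u, ⟨?_, u, rfl⟩, ?_⟩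
      · intro h; apply hne; show op (op z y) (op u y) = op z y
        rw [← hdist z u y, h]
      · show op (op z u) y = op (op z y) (op u y); exact hdist z u y
    · rintro ⟨w, ⟨hne, u, rfl⟩, rfl⟩
      refine ⟨fun h => hne ((hbij y).1 h), op u y, (hdist z u y).symm⟩
  rw [himg, Set.ncard_image_of_injective _ (hbij y).1]

/-- Splitting a finite rack by out-degree in the reduced graph, at any threshold
`Δ`, yields two subracks: the sets of vertices of out-degree `≤ Δ` and of
out-degree `> Δ` are both closed under the rack operation. -/
theorem statement10 {X : Type*} [Finite X] (op : X → X → X) (hrack : IsRack op)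
    (Δ : ℕ) (d : X → ℕ)
    (hd : ∀ v, d v = Set.ncard {w | w ≠ v ∧ ∃ y : X, op v y = w}) :
    (∀ y z : X, d y ≤ Δ → d z ≤ Δ → d (op z y) ≤ Δ) ∧
      (∀ y z : X, Δ < d y → Δ < d z → Δ < d (op z y)) := by
  refine ⟨fun y z _ hz => ?_, fun y z _ hz => ?_⟩ <;>
    rw [deg_inv op hrack d hd y z] <;> exact hz
end

section
/- Let V be a finite set with |V| = n, let (σ_j)_{j ∈ S} be a family of permutations of V indexed by a finite set S, and let L be a positive integer with L < |S|. For T ⊆ S write cp(T) for the number of equivalence classes of the equivalence relation generated by the relation r_T(u, v) := (u ≠ v ∧ ∃ j ∈ T, σ_j(u) = v) (the number of components of the graph G_T). Then there exists T ⊆ S with |T| = L such that for every j ∈ S \ T one has cp(T) − cp(T ∪ {j}) ≤ n/(L+1); consequently, for every j ∈ S \ T, the number of components of G_T merged by the edges of colour j (components C such that there exist x ∈ C, y ∉ C with x ≠ y and σ_j(x) = y or σ_j(y) = x) is at most 2n/(L+1). -/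
open Relation Function
set_option linter.unusedSectionVars false

namespace Stmt11

variable {V : Type*} [Fintype V]

/-- number of equivalence classes -/
noncomputable def cnt (s : Setoid V) : ℕ := Nat.card (Quotient s)

/-- the setoid generated by a single edge `u — v` -/
def edgeS (u v : V) : Setoid V := EqvGen.setoid (fun x y => x = u ∧ y = v)

/-- add one edge to a setoid -/
def addE (s : Setoid V) (u v : V) : Setoid V := s ⊔ edgeS u v

lemma le_addE (s : Setoid V) (u v : V) : s ≤ addE s u v := le_sup_left

lemma addE_self (s : Setoid V) {u v : V} (h : s u v) : addE s u v = s := by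
  refine sup_eq_left.mpr (Setoid.eqvGen_le ?_)
  rintro x y ⟨rfl, rfl⟩
  exact h

lemma addE_rel_uv (s : Setoid V) (u v : V) : addE s u v u v :=
  le_sup_right (a := s) (b := edgeS u v) (EqvGen.rel _ _ ⟨rfl, rfl⟩)

lemma addE_rel {s : Setoid V} {u v x y : V} :
    addE s u v x y ↔ s x y ∨ (s x u ∧ s v y) ∨ (s x v ∧ s u y) := by
  constructor
  · set R : Setoid V :=
      ⟨fun x y => s x y ∨ (s x u ∧ s v y) ∨ (s x v ∧ s u y),
        ⟨fun x => Or.inl (s.refl x),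
         by
          rintro a b (h | ⟨h1, h2⟩ | ⟨h1, h2⟩)
          · exact Or.inl (s.symm h)
          · exact Or.inr (Or.inr ⟨s.symm h2, s.symm h1⟩)
          · exact Or.inr (Or.inl ⟨s.symm h2, s.symm h1⟩),
         by
          rintro a b c (h | ⟨h1, h2⟩ | ⟨h1, h2⟩) (h' | ⟨h1', h2'⟩ | ⟨h1', h2'⟩)
          · exact Or.inl (s.trans h h')
          · exact Or.inr (Or.inl ⟨s.trans h h1', h2'⟩)
          · exact Or.inr (Or.inr ⟨s.trans h h1', h2'⟩)
          · exact Or.inr (Or.inl ⟨h1, s.trans h2 h'⟩)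
          · exact Or.inl (s.trans (s.trans h1 (s.symm (s.trans h2 h1'))) h2')
          · exact Or.inl (s.trans h1 h2')
          · exact Or.inr (Or.inr ⟨h1, s.trans h2 h'⟩)
          · exact Or.inl (s.trans h1 h2')
          · exact Or.inl (s.trans (s.trans h1 (s.symm (s.trans h2 h1'))) h2')⟩⟩ with hR
    intro h
    have hle : addE s u v ≤ R := by
      refine sup_le (fun a b hab => Or.inl hab) (Setoid.eqvGen_le ?_)
      rintro a b ⟨rfl, rfl⟩
      exact Or.inr (Or.inl ⟨s.refl a, s.refl b⟩)
    exact hle h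
  · have hs : ∀ a b : V, s a b → addE s u v a b := fun a b h => le_sup_left (a := s) h
    have huv := addE_rel_uv s u v
    rintro (h | ⟨h1, h2⟩ | ⟨h1, h2⟩)
    · exact hs _ _ h
    · exact (addE s u v).trans (hs _ _ h1) ((addE s u v).trans huv (hs _ _ h2))
    · exact (addE s u v).trans (hs _ _ h1) ((addE s u v).trans ((addE s u v).symm huv) (hs _ _ h2))

lemma cnt_le_of_le {s t : Setoid V} (h : s ≤ t) : cnt t ≤ cnt s :=
  Nat.card_le_card_of_surjective (Setoid.map_of_le h)
    (by rintro ⟨x⟩; exact ⟨Quotient.mk s x, rfl⟩)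

lemma cnt_le_card (s : Setoid V) : cnt s ≤ Fintype.card V := by
  rw [← Nat.card_eq_fintype_card]
  exact Nat.card_le_card_of_surjective (Quotient.mk s) Quotient.mk_surjective

lemma cnt_addE_lt {s : Setoid V} {u v : V} (h : ¬ s u v) : cnt (addE s u v) < cnt s := by
  classical
  letI : Fintype (Quotient s) := Fintype.ofFinite _
  letI : Fintype (Quotient (addE s u v)) := Fintype.ofFinite _
  rw [cnt, cnt, Nat.card_eq_fintype_card, Nat.card_eq_fintype_card]
  refine Fintype.card_lt_of_surjective_not_injective (Setoid.map_of_le (le_addE s u v))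
    (by rintro ⟨x⟩; exact ⟨Quotient.mk s x, rfl⟩) (fun hinj => h ?_)
  have : Setoid.map_of_le (le_addE s u v) (Quotient.mk s u)
      = Setoid.map_of_le (le_addE s u v) (Quotient.mk s v) :=
    Quotient.sound' (addE_rel_uv s u v)
  exact Quotient.exact' (hinj this)

lemma cnt_le_addE (s : Setoid V) (u v : V) : cnt s ≤ cnt (addE s u v) + 1 := by
  classical
  set f : Quotient s → Option (Quotient (addE s u v)) :=
    fun x => if x = Quotient.mk s v then none else some (Setoid.map_of_le (le_addE s u v) x)
    with hf
  have hinj : Injective f := by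
    intro x y hxy
    induction x using Quotient.ind
    induction y using Quotient.ind
    rename_i a b
    simp only [hf] at hxy
    by_cases h1 : (Quotient.mk s a) = Quotient.mk s v
    · by_cases h2 : (Quotient.mk s b) = Quotient.mk s v
      · exact h1.trans h2.symm
      · simp only [if_pos h1, if_neg h2] at hxy
        exact absurd hxy (by simp)
    · by_cases h2 : (Quotient.mk s b) = Quotient.mk s v
      · simp only [if_pos h2, if_neg h1] at hxy
        exact absurd hxy (by simp)
      · simp only [if_neg h1, if_neg h2, Option.some_inj] at hxy
        have hab : addE s u v a b := Quotient.exact' hxy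
        rcases addE_rel.mp hab with h | ⟨ha, hb⟩ | ⟨ha, hb⟩
        · exact Quotient.sound' h
        · exact absurd (Quotient.sound' (s.symm hb)) h2
        · exact absurd (Quotient.sound' ha) h1
  calc cnt s ≤ Nat.card (Option (Quotient (addE s u v))) :=
        Nat.card_le_card_of_injective f hinj
    _ = cnt (addE s u v) + 1 := Finite.card_option


lemma cnt_addE_submod {s t : Setoid V} (hst : s ≤ t) (u v : V) :
    cnt t + cnt (addE s u v) ≤ cnt s + cnt (addE t u v) := by
  by_cases h : s u v
  · rw [addE_self s h, addE_self t (hst h)]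
    omega
  · have h1 := cnt_addE_lt h
    have h2 := cnt_le_addE t u v
    omega

/-- add a list of edges -/
def addL (s : Setoid V) : List (V × V) → Setoid V
  | [] => s
  | p :: l => addL (addE s p.1 p.2) l

lemma le_addL (s : Setoid V) (l : List (V × V)) : s ≤ addL s l := by
  induction l generalizing s with
  | nil => exact le_rfl
  | cons p l ih => exact (le_addE s p.1 p.2).trans (ih _)

lemma addL_mono {s t : Setoid V} (h : s ≤ t) (l : List (V × V)) : addL s l ≤ addL t l := by
  induction l generalizing s t with
  | nil => exact h
  | cons p l ih => exact ih (sup_le_sup_right h _)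

lemma edgeS_le_addL (s : Setoid V) {l : List (V × V)} {p : V × V} (hp : p ∈ l) :
    edgeS p.1 p.2 ≤ addL s l := by
  induction l generalizing s with
  | nil => simp at hp
  | cons q l ih =>
    rcases List.mem_cons.mp hp with rfl | hp
    · exact le_trans (le_sup_right (a := s)) (le_addL _ l)
    · exact ih _ hp

lemma addL_le {s w : Setoid V} {l : List (V × V)} (hs : s ≤ w)
    (he : ∀ p ∈ l, edgeS p.1 p.2 ≤ w) : addL s l ≤ w := by
  induction l generalizing s with
  | nil => exact hs
  | cons p l ih =>
    exact ih (sup_le hs (he p List.mem_cons_self)) (fun q hq => he q (List.mem_cons_of_mem _ hq))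

lemma cnt_addL_submod {s t : Setoid V} (hst : s ≤ t) (l : List (V × V)) :
    cnt t + cnt (addL s l) ≤ cnt s + cnt (addL t l) := by
  induction l generalizing s t with
  | nil => simp only [addL]; omega
  | cons p l ih =>
    have h1 := cnt_addE_submod hst p.1 p.2
    have h2 := ih (sup_le_sup_right hst (edgeS p.1 p.2) : addE s p.1 p.2 ≤ addE t p.1 p.2)
    simp only [addL, addE] at *
    omega


lemma count_lem {A B : Type*} [Fintype A] [Fintype B] (φ : A → B) (hφ : Surjective φ)
    (M : Finset A) (h : ∀ x ∈ M, ∃ y, y ≠ x ∧ φ y = φ x) :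
    M.card + 2 * Fintype.card B ≤ 2 * Fintype.card A := by
  classical
  have hM : M.card = ∑ b : B, (M.filter fun a => φ a = b).card :=
    Finset.card_eq_sum_card_fiberwise (fun x _ => Finset.mem_univ _)
  have hA : Fintype.card A = ∑ b : B, (Finset.univ.filter fun a => φ a = b).card := by
    rw [← Finset.card_univ]
    exact Finset.card_eq_sum_card_fiberwise (fun x _ => Finset.mem_univ _)
  have hB : 2 * Fintype.card B = ∑ _b : B, 2 := by
    rw [Finset.sum_const, Finset.card_univ, smul_eq_mul, mul_comm]
  rw [hM, hA, hB, Finset.mul_sum, ← Finset.sum_add_distrib]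
  refine Finset.sum_le_sum fun b _ => ?_
  have hsub : (M.filter fun a => φ a = b) ⊆ (Finset.univ.filter fun a => φ a = b) :=
    Finset.filter_subset_filter _ (Finset.subset_univ M)
  have hcard := Finset.card_le_card hsub
  obtain ⟨a, ha⟩ := hφ b
  have h1 : 1 ≤ (Finset.univ.filter fun a => φ a = b).card :=
    Finset.card_pos.mpr ⟨a, Finset.mem_filter.mpr ⟨Finset.mem_univ _, ha⟩⟩
  by_cases hm : (M.filter fun a => φ a = b).Nonempty
  · obtain ⟨x, hx⟩ := hm
    rw [Finset.mem_filter] at hx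
    obtain ⟨y, hyx, hyφ⟩ := h x hx.1
    have h2 : 1 < (Finset.univ.filter fun a => φ a = b).card :=
      Finset.one_lt_card.mpr ⟨x, Finset.mem_filter.mpr ⟨Finset.mem_univ _, hx.2⟩,
        y, Finset.mem_filter.mpr ⟨Finset.mem_univ _, hyφ.trans hx.2⟩, fun he => hyx he.symm⟩
    omega
  · rw [Finset.not_nonempty_iff_eq_empty] at hm
    rw [hm]
    simp only [Finset.card_empty]
    omega

/-- `Quot r` has the same cardinality as the quotient by the generated setoid. -/
lemma natCard_quot (r : V → V → Prop) : Nat.card (Quot r) = cnt (EqvGen.setoid r) := by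
  apply Nat.card_congr
  exact ⟨Quot.lift (fun a => Quotient.mk (EqvGen.setoid r) a)
      (fun a b h => Quotient.sound' (EqvGen.rel a b h)),
    Quotient.lift (Quot.mk r) (fun a b h => Quot.eqvGen_sound h),
    by rintro ⟨a⟩; rfl, by rintro ⟨a⟩; rfl⟩

section Colours

variable {S : Type*} [Fintype S] [DecidableEq S] [Nonempty S] (σ : S → Equiv.Perm V)

def relA (T : Finset S) : V → V → Prop := fun u v => u ≠ v ∧ ∃ i ∈ T, σ i u = v

def stA (T : Finset S) : Setoid V := EqvGen.setoid (relA σ T)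

noncomputable def cp (T : Finset S) : ℕ := cnt (stA σ T)

noncomputable def edges (j : S) : List (V × V) := Finset.univ.toList.map fun u => (u, σ j u)

lemma stA_mono {T T' : Finset S} (h : T ⊆ T') : stA σ T ≤ stA σ T' := by
  apply Setoid.eqvGen_mono
  rintro x y ⟨hne, i, hi, hσi⟩
  exact ⟨hne, i, h hi, hσi⟩

lemma stA_insert (j : S) (T : Finset S) :
    stA σ (insert j T) = addL (stA σ T) (edges σ j) := by
  apply le_antisymm
  · apply Setoid.eqvGen_le
    rintro x y ⟨hne, i, hi, hσi⟩
    rcases Finset.mem_insert.mp hi with rfl | hiT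
    · have hemem : (x, σ i x) ∈ edges σ i :=
        List.mem_map.mpr ⟨x, Finset.mem_toList.mpr (Finset.mem_univ x), rfl⟩
      have hrel : edgeS x (σ i x) x (σ i x) := EqvGen.rel _ _ ⟨rfl, rfl⟩
      have := edgeS_le_addL (stA σ T) hemem hrel
      rwa [hσi] at this
    · exact le_addL (stA σ T) (edges σ j) (EqvGen.rel _ _ ⟨hne, i, hiT, hσi⟩)
  · refine addL_le (stA_mono σ (Finset.subset_insert j T)) ?_
    rintro p hp
    rcases List.mem_map.mp hp with ⟨u, -, rfl⟩
    apply Setoid.eqvGen_le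
    rintro x y ⟨rfl, rfl⟩
    by_cases hxy : x = σ j x
    · exact hxy ▸ (stA σ (insert j T)).refl x
    · exact EqvGen.rel _ _ ⟨hxy, j, Finset.mem_insert_self j T, rfl⟩

lemma cp_insert_le (j : S) (T : Finset S) : cp σ (insert j T) ≤ cp σ T :=
  cnt_le_of_le (stA_mono σ (Finset.subset_insert j T))

lemma cp_submod {T T' : Finset S} (h : T ⊆ T') (j : S) :
    cp σ T' + cp σ (insert j T) ≤ cp σ T + cp σ (insert j T') := by
  rw [cp, cp, cp, cp, stA_insert, stA_insert]
  exact cnt_addL_submod (stA_mono σ h) _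

/-- the drop in component count from adding colour `j` -/
noncomputable def drp (T : Finset S) (j : S) : ℕ := cp σ T - cp σ (insert j T)

lemma drp_anti {T T' : Finset S} (h : T ⊆ T') (j : S) : drp σ T' j ≤ drp σ T j := by
  have h1 := cp_submod σ h j
  have h2 := cp_insert_le σ j T
  have h3 := cp_insert_le σ j T'
  rw [drp, drp]
  omega

noncomputable def pick (T : Finset S) : S :=
  if h : (Finset.univ \ T).Nonempty then
    (Finset.exists_max_image (Finset.univ \ T) (fun j => drp σ T j) h).choose
  else Classical.arbitrary S

lemma pick_spec (T : Finset S) (h : (Finset.univ \ T).Nonempty) :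
    pick σ T ∈ Finset.univ \ T ∧ ∀ j ∈ Finset.univ \ T, drp σ T j ≤ drp σ T (pick σ T) := by
  rw [pick, dif_pos h]
  obtain ⟨h1, h2⟩ := (Finset.exists_max_image (Finset.univ \ T) (fun j => drp σ T j) h).choose_spec
  exact ⟨h1, h2⟩

noncomputable def greedy : ℕ → Finset S
  | 0 => ∅
  | k + 1 => insert (pick σ (greedy k)) (greedy k)

lemma sdiff_nonempty_of_card {T : Finset S} (h : T.card < Fintype.card S) :
    (Finset.univ \ T).Nonempty := by
  rw [Finset.sdiff_nonempty]
  intro hsub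
  have := Finset.card_le_card hsub
  rw [Finset.card_univ] at this
  omega

lemma greedy_card : ∀ k, k ≤ Fintype.card S → (greedy σ k).card = k := by
  intro k
  induction k with
  | zero => intro _; simp [greedy]
  | succ k ih =>
    intro h
    have hk := ih (by omega)
    have hne := sdiff_nonempty_of_card (T := greedy σ k) (by omega)
    have hpick := (pick_spec σ _ hne).1
    rw [Finset.mem_sdiff] at hpick
    rw [greedy, Finset.card_insert_of_notMem hpick.2, hk]

lemma greedy_subset : ∀ k m, k ≤ m → greedy σ k ⊆ greedy σ m := by
  intro k m h
  induction m with
  | zero => rw [Nat.le_zero.mp h]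
  | succ m ih =>
    rcases Nat.lt_or_ge k (m+1) with hlt | hge
    · exact (ih (by omega)).trans (Finset.subset_insert _ _)
    · rw [Nat.le_antisymm h hge]

lemma greedy_sum : ∀ k, k ≤ Fintype.card S →
    cp σ (greedy σ k) + ∑ i ∈ Finset.range k, drp σ (greedy σ i) (pick σ (greedy σ i))
      = cp σ (∅ : Finset S) := by
  intro k
  induction k with
  | zero => simp [greedy]
  | succ k ih =>
    intro h
    have hk := ih (by omega)
    have hle : cp σ (greedy σ (k+1)) ≤ cp σ (greedy σ k) := cp_insert_le σ _ _
    rw [Finset.sum_range_succ]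
    have hdef : drp σ (greedy σ k) (pick σ (greedy σ k))
        = cp σ (greedy σ k) - cp σ (greedy σ (k+1)) := rfl
    omega

end Colours

end Stmt11


open Stmt11 in
/-- Greedy choice of colours: given permutations `(σ_j)_{j ∈ S}` of a finite set
`V` of size `n` and `0 < L < |S|`, there is an `L`-element set `T ⊆ S` of
colours such that adding any further colour `j ∈ S \ T` decreases the number of
components of `G_T` by at most `n / (L + 1)`; consequently the number of
components of `G_T` merged by the edges of colour `j` is at most
`2n / (L + 1)`. -/
theorem statement11 {V : Type*} [Fintype V] {S : Type*} [Fintype S] [DecidableEq S]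
    (n : ℕ) (hV : Fintype.card V = n) (σ : S → Equiv.Perm V)
    (L : ℕ) (hL : 0 < L) (hLS : L < Fintype.card S) :
    ∃ T : Finset S, T.card = L ∧ ∀ j : S, j ∉ T →
      ((Nat.card (Quot fun u v : V => u ≠ v ∧ ∃ i ∈ T, σ i u = v) : ℝ) -
          (Nat.card (Quot fun u v : V => u ≠ v ∧ ∃ i ∈ insert j T, σ i u = v) : ℝ) ≤
        (n : ℝ) / (L + 1)) ∧
      (({C : Set V |
            (∃ a, C = {b | Relation.EqvGen (fun u v => u ≠ v ∧ ∃ i ∈ T, σ i u = v) a b}) ∧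
            ∃ x ∈ C, ∃ y, y ∉ C ∧ x ≠ y ∧ (σ j x = y ∨ σ j y = x)}).ncard : ℝ) ≤
        2 * (n : ℝ) / (L + 1) := by
  classical
  haveI hSne : Nonempty S := Fintype.card_pos_iff.mp (by omega)
  set T := greedy σ L with hT
  have hcard : T.card = L := greedy_card σ L (le_of_lt hLS)
  refine ⟨T, hcard, fun j hj => ?_⟩
  set d := drp σ T j with hd
  have hba : cp σ (insert j T) ≤ cp σ T := cp_insert_le σ j T
  have hkey : (L + 1) * d ≤ n := by
    have hsum := greedy_sum σ L (le_of_lt hLS)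
    rw [← hT] at hsum
    have hdk : ∀ k ∈ Finset.range L, d ≤ drp σ (greedy σ k) (pick σ (greedy σ k)) := by
      intro k hk
      rw [Finset.mem_range] at hk
      have hsub : greedy σ k ⊆ T := greedy_subset σ k L (le_of_lt hk)
      have h1 : d ≤ drp σ (greedy σ k) j := drp_anti σ hsub j
      have hkcard : (greedy σ k).card = k := greedy_card σ k (by omega)
      have hne := sdiff_nonempty_of_card (T := greedy σ k) (by omega)
      have hjmem : j ∈ Finset.univ \ greedy σ k := by
        rw [Finset.mem_sdiff]
        exact ⟨Finset.mem_univ _, fun hmem => hj (hsub hmem)⟩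
      exact h1.trans ((pick_spec σ _ hne).2 j hjmem)
    have hsum_ge : L * d ≤ ∑ i ∈ Finset.range L, drp σ (greedy σ i) (pick σ (greedy σ i)) := by
      calc L * d = (Finset.range L).card • d := by rw [Finset.card_range, smul_eq_mul]
        _ ≤ _ := Finset.card_nsmul_le_sum _ _ _ hdk
    have hcp0 : cp σ (∅ : Finset S) ≤ n := hV ▸ cnt_le_card _
    have hdle : d ≤ cp σ T := by rw [hd, drp]; omega
    have hexp : (L + 1) * d = L * d + d := by ring
    omega
  constructor
  · have e1 : Nat.card (Quot fun u v : V => u ≠ v ∧ ∃ i ∈ T, σ i u = v) = cp σ T :=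
      natCard_quot _
    have e2 : Nat.card (Quot fun u v : V => u ≠ v ∧ ∃ i ∈ insert j T, σ i u = v)
        = cp σ (insert j T) := natCard_quot _
    rw [e1, e2, le_div_iff₀ (by positivity : (0:ℝ) < (L:ℝ) + 1)]
    have hsub : (cp σ T : ℝ) - (cp σ (insert j T) : ℝ) = (d : ℝ) := by
      rw [hd, drp, Nat.cast_sub hba]
    rw [hsub, mul_comm]
    exact_mod_cast hkey
  · set st1 := stA σ T
    set st2 := stA σ (insert j T) with hst2
    have hle12 : st1 ≤ st2 := stA_mono σ (Finset.subset_insert j T)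
    letI : Fintype (Quotient st1) := Fintype.ofFinite _
    letI : Fintype (Quotient st2) := Fintype.ofFinite _
    set φ : Quotient st1 → Quotient st2 := Setoid.map_of_le hle12 with hφ
    have hφsurj : Function.Surjective φ := by rintro ⟨x⟩; exact ⟨Quotient.mk st1 x, rfl⟩
    set ψ : Quotient st1 → Set V :=
      Quotient.lift (fun a => {b | Relation.EqvGen (relA σ T) a b})
        (fun a b h => by
          ext c
          exact ⟨fun hc => Relation.EqvGen.trans _ _ _ (Relation.EqvGen.symm _ _ h) hc,
            fun hc => Relation.EqvGen.trans _ _ _ h hc⟩) with hψ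
    have hψinj : Function.Injective ψ := by
      intro x y
      induction x using Quotient.ind
      induction y using Quotient.ind
      rename_i a b
      intro h
      have hb : b ∈ {c | Relation.EqvGen (relA σ T) a c} := by
        rw [show {c | Relation.EqvGen (relA σ T) a c} = ψ (Quotient.mk st1 a) from rfl, h]
        exact Relation.EqvGen.refl b
      exact Quotient.sound' hb
    set Mq : Set (Quotient st1) :=
      {q | ∃ x ∈ ψ q, ∃ y, y ∉ ψ q ∧ x ≠ y ∧ (σ j x = y ∨ σ j y = x)} with hMq
    have hMset : {C : Set V |
        (∃ a, C = {b | Relation.EqvGen (fun u v => u ≠ v ∧ ∃ i ∈ T, σ i u = v) a b}) ∧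
        ∃ x ∈ C, ∃ y, y ∉ C ∧ x ≠ y ∧ (σ j x = y ∨ σ j y = x)} = ψ '' Mq := by
      ext C
      simp only [Set.mem_setOf_eq, Set.mem_image]
      constructor
      · rintro ⟨⟨a, rfl⟩, hx⟩
        exact ⟨Quotient.mk st1 a, hx, rfl⟩
      · rintro ⟨q, hq, rfl⟩
        induction q using Quotient.ind
        rename_i a
        exact ⟨⟨a, rfl⟩, hq⟩
    have hfin : Mq.Finite := Set.toFinite _
    have hmate : ∀ q ∈ hfin.toFinset, ∃ p, p ≠ q ∧ φ p = φ q := by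
      intro q hq
      rw [Set.Finite.mem_toFinset] at hq
      induction q using Quotient.ind
      rename_i a
      obtain ⟨x, hxq, y, hyq, hxy, hor⟩ := hq
      refine ⟨Quotient.mk st1 y, fun he => hyq ?_, ?_⟩
      · exact Relation.EqvGen.symm _ _ (Quotient.exact' he)
      · have hax : st2 a x := hle12 hxq
        have hxy2 : st2 x y := by
          rcases hor with h | h
          · exact Relation.EqvGen.rel _ _ ⟨hxy, j, Finset.mem_insert_self j T, h⟩
          · exact Relation.EqvGen.symm _ _
              (Relation.EqvGen.rel _ _ ⟨hxy.symm, j, Finset.mem_insert_self j T, h⟩)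
        exact Quotient.sound' (st2.symm (st2.trans hax hxy2))
    have hcount := count_lem φ hφsurj hfin.toFinset hmate
    have hcnt1 : Fintype.card (Quotient st1) = cp σ T := by
      rw [cp, cnt, Nat.card_eq_fintype_card]
    have hcnt2 : Fintype.card (Quotient st2) = cp σ (insert j T) := by
      rw [cp, cnt, Nat.card_eq_fintype_card]
    rw [hcnt1, hcnt2] at hcount
    have hncard : ({C : Set V |
        (∃ a, C = {b | Relation.EqvGen (fun u v => u ≠ v ∧ ∃ i ∈ T, σ i u = v) a b}) ∧
        ∃ x ∈ C, ∃ y, y ∉ C ∧ x ≠ y ∧ (σ j x = y ∨ σ j y = x)}).ncard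
        = hfin.toFinset.card := by
      rw [hMset, Set.ncard_image_of_injective _ hψinj, Set.ncard_eq_toFinset_card _ hfin]
    rw [hncard]
    rw [le_div_iff₀ (by positivity : (0:ℝ) < (L:ℝ) + 1)]
    have hm : hfin.toFinset.card * (L + 1) ≤ 2 * n := by
      have hm2d : hfin.toFinset.card ≤ 2 * d := by
        rw [hd, drp]; omega
      calc hfin.toFinset.card * (L + 1) ≤ 2 * d * (L + 1) := Nat.mul_le_mul_right _ hm2d
        _ = 2 * ((L + 1) * d) := by ring
        _ ≤ 2 * n := by omega
    calc (hfin.toFinset.card : ℝ) * ((L:ℝ) + 1) = ((hfin.toFinset.card * (L + 1) : ℕ) : ℝ) := by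
          push_cast; ring
      _ ≤ ((2 * n : ℕ) : ℝ) := by exact_mod_cast hm
      _ = 2 * (n:ℝ) := by push_cast; ring
end

section
/- There exists a positive integer N such that for every integer n ≥ N and every rack (Fin n, ▷) with associated permutations f_y (f_y(x) = x ▷ y), there exists a subset U ⊆ Fin n with |U| ≤ (3/2)·n/(log₂ n)^{3/2} such that every v ∈ Fin n with d_{Fin n}⁺(v) > (log₂ n)³ satisfies d_U⁺(v) > (log₂ n)^{3/2}/2; consequently the number of components of the graph G_U that are contained in S_{>Δ} := {v : d_{Fin n}⁺(v) > (log₂ n)³} is at most 2n/(log₂ n)^{3/2}. -/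
section Helpers
open Finset Nat

lemma wsum {α : Type*} [DecidableEq α] (p q : ℝ) (hpq : p + q = 1) (J : Finset α) :
    ∀ (s : Finset α) (g : Finset α → ℝ),
      ∑ U ∈ s.powerset, p ^ U.card * q ^ (s.card - U.card) * g (U ∩ J)
        = ∑ A ∈ (s ∩ J).powerset, p ^ A.card * q ^ ((s ∩ J).card - A.card) * g A := by
  intro s
  induction s using Finset.induction_on with
  | empty => intro g; simp
  | insert a s ha ih =>
    intro g
    rw [Finset.sum_powerset_insert ha]
    have hc : (insert a s).card = s.card + 1 := Finset.card_insert_of_notMem ha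
    have h1 : ∑ U ∈ s.powerset, p ^ U.card * q ^ ((insert a s).card - U.card) * g (U ∩ J)
        = q * ∑ U ∈ s.powerset, p ^ U.card * q ^ (s.card - U.card) * g (U ∩ J) := by
      rw [Finset.mul_sum]
      refine Finset.sum_congr rfl fun U hU => ?_
      have hUs : U.card ≤ s.card := Finset.card_le_card (Finset.mem_powerset.1 hU)
      rw [hc, Nat.succ_sub hUs, pow_succ]
      ring
    have h2 : ∑ U ∈ s.powerset, p ^ (insert a U).card * q ^ ((insert a s).card - (insert a U).card)
          * g ((insert a U) ∩ J)
        = p * ∑ U ∈ s.powerset, p ^ U.card * q ^ (s.card - U.card) * g ((insert a U) ∩ J) := by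
      rw [Finset.mul_sum]
      refine Finset.sum_congr rfl fun U hU => ?_
      have haU : a ∉ U := fun h => ha (Finset.mem_powerset.1 hU h)
      rw [Finset.card_insert_of_notMem haU, hc, Nat.succ_sub_succ, pow_succ]
      ring
    rw [h1, h2]
    by_cases haJ : a ∈ J
    · have hins : ∀ U : Finset α, (insert a U) ∩ J = insert a (U ∩ J) :=
        fun U => Finset.insert_inter_of_mem haJ
      have haSJ : a ∉ s ∩ J := fun h => ha (Finset.mem_inter.1 h).1
      have hcc : (insert a (s ∩ J)).card = (s ∩ J).card + 1 :=
        Finset.card_insert_of_notMem haSJ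
      simp_rw [hins]
      rw [ih g, ih (fun A => g (insert a A)), Finset.sum_powerset_insert haSJ]
      have r1 : ∑ A ∈ (s ∩ J).powerset, p ^ A.card * q ^ ((insert a (s ∩ J)).card - A.card) * g A
          = q * ∑ A ∈ (s ∩ J).powerset, p ^ A.card * q ^ ((s ∩ J).card - A.card) * g A := by
        rw [Finset.mul_sum]
        refine Finset.sum_congr rfl fun A hA => ?_
        have : A.card ≤ (s ∩ J).card := Finset.card_le_card (Finset.mem_powerset.1 hA)
        rw [hcc, Nat.succ_sub this, pow_succ]; ring
      have r2 : ∑ A ∈ (s ∩ J).powerset,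
            p ^ (insert a A).card * q ^ ((insert a (s ∩ J)).card - (insert a A).card) * g (insert a A)
          = p * ∑ A ∈ (s ∩ J).powerset, p ^ A.card * q ^ ((s ∩ J).card - A.card) * g (insert a A) := by
        rw [Finset.mul_sum]
        refine Finset.sum_congr rfl fun A hA => ?_
        have haA : a ∉ A := fun h => haSJ (Finset.mem_powerset.1 hA h)
        rw [Finset.card_insert_of_notMem haA, hcc, Nat.succ_sub_succ, pow_succ]; ring
      rw [r1, r2]
    · have hins : ∀ U : Finset α, (insert a U) ∩ J = U ∩ J :=
        fun U => Finset.insert_inter_of_notMem haJ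
      simp_rw [hins]
      rw [ih g, ← add_mul, add_comm q p, hpq, one_mul]

lemma fac_le_aux : ∀ (d i : ℕ), (i + d)! ≤ i ! * (i + d) ^ d := by
  intro d
  induction d with
  | zero => intro i; simp
  | succ d ih =>
    intro i
    have h1 : (i + (d+1))! = (i + d + 1) * (i + d)! := by
      rw [show i + (d+1) = (i+d) + 1 by ring, Nat.factorial_succ]
    rw [h1]
    calc (i + d + 1) * (i + d)! ≤ (i + d + 1) * (i ! * (i + d) ^ d) :=
          Nat.mul_le_mul_left _ (ih i)
      _ ≤ (i + d + 1) * (i ! * (i + d + 1) ^ d) := by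
          exact Nat.mul_le_mul_left _ (Nat.mul_le_mul_left _ (Nat.pow_le_pow_left (by omega) d))
      _ = i ! * (i + (d+1)) ^ (d+1) := by ring_nf
  
lemma fac_le {i k : ℕ} (h : i ≤ k) : k ! ≤ i ! * k ^ (k - i) := by
  have := fac_le_aux (k - i) i
  rwa [Nat.add_sub_cancel' h] at this

lemma kk_le : ∀ k : ℕ, (k:ℝ) ^ k ≤ k ! * Real.exp 1 ^ k := by
  intro k
  have h1 : (k:ℝ) ^ k / k ! ≤ Real.exp k := by
    have := Real.sum_le_exp_of_nonneg (x := (k:ℝ)) (Nat.cast_nonneg k) (k+1)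
    refine le_trans ?_ this
    refine Finset.single_le_sum (f := fun i => (k:ℝ)^i / i !) ?_ (Finset.self_mem_range_succ k)
    intro i _; positivity
  have h2 : Real.exp (k:ℝ) = Real.exp 1 ^ k := by
    rw [← Real.exp_nat_mul]; norm_num
  rw [div_le_iff₀ (by positivity), h2] at h1
  linarith [h1]

lemma binom_tail {α : Type*} [DecidableEq α] (p q : ℝ) (hp : 0 ≤ p) (hq0 : 0 < q) (hq1 : q ≤ 1)
    (J : Finset α) (k : ℕ) (hkM : k ≤ J.card)
    (h2k : 2 * (k:ℝ) ≤ J.card * p) (h6 : (J.card : ℝ) * p * Real.exp 1 ≤ 6 * k) :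
    ∑ A ∈ J.powerset, p ^ A.card * q ^ (J.card - A.card) *
        (if A.card ≤ k then (1:ℝ) else 0)
      ≤ 2 * 6 ^ k * q ^ (J.card - k) := by
  set M := J.card with hM
  have hMp0 : 0 ≤ (M:ℝ) * p := by positivity
  -- group by cardinality
  rw [Finset.sum_powerset]
  have step1 : ∀ i ∈ Finset.range (M+1),
      ∑ A ∈ Finset.powersetCard i J, p ^ A.card * q ^ (M - A.card) *
          (if A.card ≤ k then (1:ℝ) else 0)
        = (M.choose i : ℝ) * (p ^ i * q ^ (M - i) * (if i ≤ k then (1:ℝ) else 0)) := by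
    intro i _
    rw [Finset.sum_congr rfl (fun A hA => by
      rw [(Finset.mem_powersetCard.1 hA).2]), Finset.sum_const, Finset.card_powersetCard]
    simp [mul_comm]
    rfl
  rw [Finset.sum_congr rfl step1]
  -- restrict to range (k+1)
  have step2 : ∑ i ∈ Finset.range (M+1),
      (M.choose i : ℝ) * (p ^ i * q ^ (M - i) * (if i ≤ k then (1:ℝ) else 0))
      = ∑ i ∈ Finset.range (k+1), (M.choose i : ℝ) * (p ^ i * q ^ (M - i)) := by
    have hsub : Finset.range (k+1) ⊆ Finset.range (M+1) := Finset.range_subset_range.2 (by omega)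
    have e1 := (Finset.sum_subset hsub (f := fun i =>
        (M.choose i : ℝ) * (p ^ i * q ^ (M - i) * (if i ≤ k then (1:ℝ) else 0)))
      (fun i _ hi => by
        have : ¬ i ≤ k := by simp only [Finset.mem_range] at hi; omega
        simp [this])).symm
    rw [e1]
    refine Finset.sum_congr rfl fun i hi => ?_
    have : i ≤ k := Nat.lt_succ_iff.1 (Finset.mem_range.1 hi)
    simp [this]
  rw [step2]
  have step3 : ∀ i ∈ Finset.range (k+1),
      (M.choose i : ℝ) * (p ^ i * q ^ (M - i))
        ≤ ((M:ℝ)*p) ^ k / k ! * (1/2) ^ (k - i) * q ^ (M - k) := by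
    intro i hi
    have hik : i ≤ k := Nat.lt_succ_iff.1 (Finset.mem_range.1 hi)
    have hqle : q ^ (M - i) ≤ q ^ (M - k) :=
      pow_le_pow_of_le_one hq0.le hq1 (by omega)
    have hchoose : (M.choose i : ℝ) * p ^ i ≤ ((M:ℝ)*p) ^ k / k ! * (1/2) ^ (k - i) := by
      have c1 : (M.choose i : ℝ) ≤ (M:ℝ) ^ i / i ! := Nat.choose_le_pow_div i M
      have c2 : (M.choose i : ℝ) * p ^ i ≤ ((M:ℝ)*p) ^ i / i ! := by
        rw [mul_pow]
        calc (M.choose i : ℝ) * p ^ i ≤ ((M:ℝ) ^ i / i !) * p ^ i := by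
              exact mul_le_mul_of_nonneg_right c1 (by positivity)
          _ = (M:ℝ)^i * p^i / i ! := by ring
      refine c2.trans ?_
      have key : ((M:ℝ)*p) ^ i * (k ! * 2 ^ (k-i)) ≤ ((M:ℝ)*p) ^ k * i ! := by
        have e1 : ((M:ℝ)*p) ^ k = ((M:ℝ)*p) ^ i * ((M:ℝ)*p) ^ (k-i) := by
          rw [← pow_add]; congr 1; omega
        have e2 : (k ! : ℝ) ≤ i ! * (k:ℝ) ^ (k-i) := by
          exact_mod_cast Nat.cast_le.2 (fac_le hik)
        have e3 : (k ! : ℝ) * 2 ^ (k-i) ≤ i ! * ((M:ℝ)*p) ^ (k-i) := by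
          calc (k ! : ℝ) * 2 ^ (k-i) ≤ (i ! * (k:ℝ) ^ (k-i)) * 2 ^ (k-i) := by
                exact mul_le_mul_of_nonneg_right e2 (by positivity)
            _ = i ! * (2*(k:ℝ)) ^ (k-i) := by rw [mul_pow]; ring
            _ ≤ i ! * ((M:ℝ)*p) ^ (k-i) := by
                refine mul_le_mul_of_nonneg_left (pow_le_pow_left₀ (by positivity) h2k _) (by positivity)
        calc ((M:ℝ)*p) ^ i * (k ! * 2 ^ (k-i)) ≤ ((M:ℝ)*p) ^ i * (i ! * ((M:ℝ)*p) ^ (k-i)) := by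
              exact mul_le_mul_of_nonneg_left e3 (by positivity)
          _ = ((M:ℝ)*p) ^ k * i ! := by rw [e1]; ring
      have h2pos : (0:ℝ) < k ! * 2 ^ (k-i) := by positivity
      have : ((M:ℝ)*p) ^ i / i ! ≤ ((M:ℝ)*p) ^ k / (k ! * 2 ^ (k-i)) := by
        rw [div_le_div_iff₀ (by positivity) h2pos]
        linarith [key]
      refine this.trans_eq ?_
      rw [div_pow, one_pow]
      field_simp
    calc (M.choose i : ℝ) * (p ^ i * q ^ (M - i))
        = ((M.choose i : ℝ) * p ^ i) * q ^ (M-i) := by ring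
      _ ≤ (((M:ℝ)*p) ^ k / k ! * (1/2) ^ (k - i)) * q ^ (M - k) := by
          refine mul_le_mul hchoose hqle (by positivity) ?_
          positivity
  calc ∑ i ∈ Finset.range (k+1), (M.choose i : ℝ) * (p ^ i * q ^ (M - i))
      ≤ ∑ i ∈ Finset.range (k+1), ((M:ℝ)*p) ^ k / k ! * (1/2) ^ (k - i) * q ^ (M - k) :=
        Finset.sum_le_sum step3
    _ = ((M:ℝ)*p) ^ k / k ! * q ^ (M - k) * ∑ i ∈ Finset.range (k+1), (1/2:ℝ) ^ (k - i) := by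
        rw [Finset.mul_sum]; refine Finset.sum_congr rfl fun i _ => by ring
    _ ≤ ((M:ℝ)*p) ^ k / k ! * q ^ (M - k) * 2 := by
        refine mul_le_mul_of_nonneg_left ?_ (by positivity)
        have : ∑ i ∈ Finset.range (k+1), (1/2:ℝ) ^ (k - i)
            = ∑ i ∈ Finset.range (k+1), (1/2:ℝ) ^ i := by
          rw [← Finset.sum_range_reflect]
          refine Finset.sum_congr rfl fun i hi => by
            congr 1; have := Finset.mem_range.1 hi; omega
        rw [this]
        exact sum_geometric_two_le _
    _ ≤ 2 * 6 ^ k * q ^ (M - k) := by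
        have hc : ((M:ℝ)*p) ^ k / k ! ≤ 6 ^ k := by
          rw [div_le_iff₀ (by positivity)]
          have h1 : ((M:ℝ)*p) ^ k ≤ (6 * k / Real.exp 1) ^ k := by
            refine pow_le_pow_left₀ hMp0 ?_ _
            rw [le_div_iff₀ (Real.exp_pos 1)]
            linarith [h6]
          refine h1.trans ?_
          have h2 : (6 * (k:ℝ) / Real.exp 1) ^ k = 6 ^ k * ((k:ℝ) ^ k / Real.exp 1 ^ k) := by
            rw [div_pow, mul_pow]; ring
          rw [h2]
          have h3 : (k:ℝ) ^ k / Real.exp 1 ^ k ≤ k ! := by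
            rw [div_le_iff₀ (by positivity)]
            exact kk_le k
          calc (6:ℝ) ^ k * ((k:ℝ) ^ k / Real.exp 1 ^ k) ≤ 6 ^ k * k ! := by
                exact mul_le_mul_of_nonneg_left h3 (by positivity)
            _ = 6 ^ k * k ! := rfl
        calc ((M:ℝ)*p) ^ k / k ! * q ^ (M - k) * 2
            = (((M:ℝ)*p) ^ k / k !) * (q ^ (M-k) * 2) := by ring
          _ ≤ 6 ^ k * (q ^ (M-k) * 2) := by
              refine mul_le_mul_of_nonneg_right hc (by positivity)
          _ = 2 * 6 ^ k * q ^ (M - k) := by ring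

section
variable {α : Type*} [DecidableEq α] [Fintype α] (p q : ℝ)

lemma wsum_cond (hpq : p + q = 1) (J : Finset α) (g : Finset α → ℝ) :
    ∑ U ∈ (univ : Finset α).powerset,
        p ^ U.card * q ^ ((univ : Finset α).card - U.card) * g (U ∩ J)
      = ∑ A ∈ J.powerset, p ^ A.card * q ^ (J.card - A.card) * g A := by
  rw [wsum p q hpq J univ g, Finset.univ_inter]

lemma wsum_one (hpq : p + q = 1) :
    ∑ U ∈ (univ : Finset α).powerset, p ^ U.card * q ^ ((univ : Finset α).card - U.card) = 1 := by
  have := wsum_cond p q hpq (∅ : Finset α) (fun _ => (1:ℝ))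
  simpa using this

lemma wsum_card (hpq : p + q = 1) :
    ∑ U ∈ (univ : Finset α).powerset,
        p ^ U.card * q ^ ((univ : Finset α).card - U.card) * (U.card : ℝ)
      = p * Fintype.card α := by
  have hrw : ∀ U : Finset α, (U.card : ℝ)
      = ∑ j ∈ (univ : Finset α), ((U ∩ {j}).card : ℝ) := by
    intro U
    have : ∀ j, ((U ∩ {j}).card : ℝ) = if j ∈ U then (1:ℝ) else 0 := by
      intro j
      by_cases h : j ∈ U
      · simp [Finset.inter_singleton_of_mem h, h]
      · simp [Finset.inter_singleton_of_notMem h, h]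
    rw [Finset.sum_congr rfl (fun j _ => this j), Finset.sum_ite_mem,
      Finset.univ_inter, Finset.sum_const]
    simp
  calc ∑ U ∈ (univ : Finset α).powerset,
        p ^ U.card * q ^ ((univ : Finset α).card - U.card) * (U.card : ℝ)
      = ∑ U ∈ (univ : Finset α).powerset, ∑ j ∈ (univ : Finset α),
          p ^ U.card * q ^ ((univ : Finset α).card - U.card) * ((U ∩ {j}).card : ℝ) := by
        refine Finset.sum_congr rfl fun U _ => ?_
        rw [hrw U, Finset.mul_sum]
    _ = ∑ j ∈ (univ : Finset α), ∑ U ∈ (univ : Finset α).powerset,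
          p ^ U.card * q ^ ((univ : Finset α).card - U.card) * ((U ∩ {j}).card : ℝ) :=
        Finset.sum_comm
    _ = ∑ j ∈ (univ : Finset α), p := by
        refine Finset.sum_congr rfl fun j _ => ?_
        rw [wsum_cond p q hpq ({j} : Finset α) (fun A => (A.card : ℝ))]
        have hps : ({j} : Finset α).powerset = {∅, {j}} := by
          rw [show ({j} : Finset α) = insert j ∅ by simp, Finset.powerset_insert]
          rfl
        rw [hps, Finset.sum_insert (by simp [Finset.eq_empty_iff_forall_notMem, Ne.symm]), Finset.sum_singleton]
        simp
    _ = p * Fintype.card α := by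
        rw [Finset.sum_const, Finset.card_univ]; simp [mul_comm]

end

lemma six_le_exp : (6:ℝ) ≤ Real.exp (9/5) := by
  have h1 : (2.7182818283:ℝ) ≤ Real.exp 1 := Real.exp_one_gt_d9.le
  have h5 : (6:ℝ) ^ (5:ℕ) ≤ Real.exp (9/5) ^ (5:ℕ) := by
    have : Real.exp (9/5) ^ (5:ℕ) = Real.exp 9 := by
      rw [← Real.exp_nat_mul]; norm_num
    rw [this]
    have : Real.exp 9 = Real.exp 1 ^ (9:ℕ) := by rw [← Real.exp_nat_mul]; norm_num
    rw [this]
    calc (6:ℝ)^(5:ℕ) ≤ (2.7182818283:ℝ)^(9:ℕ) := by norm_num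
      _ ≤ Real.exp 1 ^ (9:ℕ) := by
          exact pow_le_pow_left₀ (by norm_num) h1 _
  exact le_of_pow_le_pow_left₀ (by norm_num) (Real.exp_pos _).le h5

lemma comp_count {β : Type*} [Fintype β] (r : β → β → Prop) (S : Set β) (t : ℕ)
    (hdeg : ∀ a ∈ S, t + 1 ≤ ({b | Relation.EqvGen r a b}).ncard) :
    ({C : Set β | (∃ a, C = {b | Relation.EqvGen r a b}) ∧ C ⊆ S}).ncard * (t + 1)
      ≤ Fintype.card β := by
  classical
  set 𝒞 : Set (Set β) := {C | (∃ a, C = {b | Relation.EqvGen r a b}) ∧ C ⊆ S} with hC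
  have hfin : 𝒞.Finite := Set.toFinite _
  set F : Finset (Set β) := hfin.toFinset with hF
  have hdisj : ∀ C ∈ F, ∀ C' ∈ F, C ≠ C' →
      Disjoint ((Set.toFinite C).toFinset) ((Set.toFinite C').toFinset) := by
    intro C hCm C' hC'm hne
    rw [hF, Set.Finite.mem_toFinset] at hCm hC'm
    obtain ⟨⟨a, rfl⟩, _⟩ := hCm
    obtain ⟨⟨b, rfl⟩, _⟩ := hC'm
    rw [Finset.disjoint_left]
    intro x hx hx'
    rw [Set.Finite.mem_toFinset] at hx hx'
    refine hne ?_
    have hax : Relation.EqvGen r a x := hx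
    have hbx : Relation.EqvGen r b x := hx'
    ext y
    simp only [Set.mem_setOf_eq]
    constructor
    · intro hay
      exact Relation.EqvGen.trans _ _ _ hbx
        (Relation.EqvGen.trans _ _ _ (Relation.EqvGen.symm _ _ hax) hay)
    · intro hby
      exact Relation.EqvGen.trans _ _ _ hax
        (Relation.EqvGen.trans _ _ _ (Relation.EqvGen.symm _ _ hbx) hby)
  have hle : ∀ C ∈ F, t + 1 ≤ ((Set.toFinite C).toFinset).card := by
    intro C hCm
    rw [hF, Set.Finite.mem_toFinset] at hCm
    obtain ⟨⟨a, rfl⟩, hsub⟩ := hCm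
    have ha : a ∈ {b | Relation.EqvGen r a b} := Relation.EqvGen.refl a
    have := hdeg a (hsub ha)
    rwa [Set.ncard_eq_toFinset_card _ (Set.toFinite _)] at this
  calc 𝒞.ncard * (t + 1) = F.card * (t + 1) := by
        rw [Set.ncard_eq_toFinset_card _ hfin]
    _ = ∑ _C ∈ F, (t + 1) := by rw [Finset.sum_const, smul_eq_mul, mul_comm]
    _ ≤ ∑ C ∈ F, ((Set.toFinite C).toFinset).card := Finset.sum_le_sum hle
    _ = (F.biUnion (fun C => (Set.toFinite C).toFinset)).card :=
        (Finset.card_biUnion hdisj).symm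
    _ ≤ Fintype.card β := Finset.card_le_univ _

end Helpers



set_option maxRecDepth 10000 in
set_option maxHeartbeats 1000000 in
open Finset Nat in
/-- For all sufficiently large `n` and every rack on `Fin n`, there is a set
`U ⊆ Fin n` of size at most `(3/2) n / (log₂ n)^(3/2)` such that every vertex of
out-degree greater than `(log₂ n)³` in the full reduced graph has out-degree
greater than `(log₂ n)^(3/2) / 2` with respect to `U`; consequently the number
of components of `G_U` contained in `S_{>Δ}` is at most `2n / (log₂ n)^(3/2)`. -/
theorem statement15 :
    ∃ N : ℕ, 0 < N ∧ ∀ n : ℕ, N ≤ n → ∀ op : Fin n → Fin n → Fin n, IsRack op →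
      ∃ U : Set (Fin n),
        ((U.ncard : ℝ) ≤ 3 / 2 * (n : ℝ) / (Real.logb 2 n) ^ ((3 : ℝ) / 2)) ∧
        (∀ v : Fin n,
          (Real.logb 2 n) ^ 3 < (Set.ncard {w | w ≠ v ∧ ∃ j : Fin n, op v j = w} : ℝ) →
          (Real.logb 2 n) ^ ((3 : ℝ) / 2) / 2 <
            (Set.ncard {w | w ≠ v ∧ ∃ j ∈ U, op v j = w} : ℝ)) ∧
        (({C : Set (Fin n) |
            (∃ a, C = {b | Relation.EqvGen
              (fun x y => x ≠ y ∧ ∃ j ∈ U, op x j = y) a b}) ∧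
            C ⊆ {v | (Real.logb 2 n) ^ 3 <
              (Set.ncard {w | w ≠ v ∧ ∃ j : Fin n, op v j = w} : ℝ)}}).ncard : ℝ) ≤
          2 * (n : ℝ) / (Real.logb 2 n) ^ ((3 : ℝ) / 2) := by
  classical
  refine ⟨2 ^ 1024, (by positivity), ?_⟩
  intro n hn op _hop
  have hn0 : 0 < n := lt_of_lt_of_le (by positivity : (0:ℕ) < 2 ^ 1024) hn
  have hnR0 : (0:ℝ) < n := by exact_mod_cast hn0
  have hnR : ((2:ℝ)) ^ (1024:ℕ) ≤ (n:ℝ) := by exact_mod_cast hn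
  set l : ℝ := Real.logb 2 (n:ℝ) with hldef
  have hl : (1024:ℝ) ≤ l := by
    rw [hldef, Real.le_logb_iff_rpow_le (by norm_num) hnR0]
    rw [show ((1024:ℝ)) = ((1024:ℕ):ℝ) by norm_num, Real.rpow_natCast]
    exact_mod_cast hnR
  clear hn hnR
  have hl0 : (0:ℝ) ≤ l := by linarith
  have hlpos : (0:ℝ) < l := by linarith
  set L : ℝ := l ^ ((3:ℝ)/2) with hLdef
  have hhalf : (1024:ℝ) ^ ((1:ℝ)/2) = 32 := by
    rw [show (1024:ℝ) = (32:ℝ)^(2:ℕ) by norm_num, ← Real.rpow_natCast (32:ℝ) 2,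
      ← Real.rpow_mul (by norm_num)]
    norm_num
  have hsq : (32:ℝ) ≤ l ^ ((1:ℝ)/2) := by
    rw [← hhalf]
    exact Real.rpow_le_rpow (by norm_num) hl (by norm_num)
  have hLl : 32 * l ≤ L := by
    have h1 : l ^ ((1:ℝ)/2) * l ^ (1:ℝ) = L := by
      rw [← Real.rpow_add hlpos]; norm_num [hLdef]
    have := mul_le_mul_of_nonneg_right hsq hl0
    rw [Real.rpow_one] at h1
    linarith [this, h1.ge]
  have hL0 : (0:ℝ) < L := by linarith
  have hLbig : (32768:ℝ) ≤ L := by nlinarith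
  have hL2 : L ^ 2 = l ^ 3 := by
    have : L ^ 2 = l ^ (((3:ℝ)/2) * 2) := by
      rw [← Real.rpow_natCast L 2, hLdef, ← Real.rpow_mul hl0]
      norm_num
    rw [this, show ((3:ℝ)/2) * 2 = ((3:ℕ):ℝ) by norm_num, Real.rpow_natCast]
  have hL1 : (1:ℝ) ≤ L := by linarith
  set p : ℝ := 1 / L with hpdef
  set q : ℝ := 1 - p with hqdef
  have hp0 : 0 < p := by positivity
  have hp2 : p ≤ 1/2 := by
    rw [hpdef, div_le_div_iff₀ hL0 (by norm_num)]; linarith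
  have hq0 : (0:ℝ) < q := by rw [hqdef]; linarith
  have hq1 : q ≤ 1 := by rw [hqdef]; linarith
  have hpq : p + q = 1 := by rw [hqdef]; ring
  set M : ℕ := ⌈l ^ 3⌉₊ with hMdef
  set k : ℕ := ⌊L / 2⌋₊ with hkdef
  have hMge : l ^ 3 ≤ (M:ℝ) := Nat.le_ceil _
  have hMle : (M:ℝ) ≤ l ^ 3 + 1 := by
    have := Nat.ceil_lt_add_one (show (0:ℝ) ≤ l ^ 3 by positivity)
    linarith
  have hkle : (k:ℝ) ≤ L / 2 := Nat.floor_le (by positivity)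
  have hkgt : L / 2 < (k:ℝ) + 1 := Nat.lt_floor_add_one _
  have hkM : k ≤ M := by
    have : (k:ℝ) ≤ (M:ℝ) := by nlinarith
    exact_mod_cast this
  have hMp : L ≤ (M:ℝ) * p := by
    rw [hpdef]
    rw [mul_one_div, le_div_iff₀ hL0]
    nlinarith
  have hMple : (M:ℝ) * p ≤ L + 1 := by
    rw [hpdef, mul_one_div, div_le_iff₀ hL0]
    have h1L : 1 / L ≤ 1 := by rw [div_le_one hL0]; linarith
    nlinarith
  have h2k : 2 * (k:ℝ) ≤ (M:ℝ) * p := by linarith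
  have h6 : (M:ℝ) * p * Real.exp 1 ≤ 6 * k := by
    have he : Real.exp 1 ≤ 2.7182818286 := Real.exp_one_lt_d9.le
    have he0 : (0:ℝ) < Real.exp 1 := Real.exp_pos 1
    have hMp0 : (0:ℝ) ≤ (M:ℝ) * p := by positivity
    have hstep : (M:ℝ) * p * Real.exp 1 ≤ (L+1) * 2.7182818286 :=
      mul_le_mul hMple he he0.le (by linarith)
    linarith
  have hpk : p * k ≤ 1/2 := by
    have h1 : p * k = k / L := by rw [hpdef]; ring
    rw [h1, div_le_iff₀ hL0]
    linarith
  set H : Finset (Fin n) := Finset.univ.filter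
    (fun v => l ^ 3 < ((Set.ncard {w | w ≠ v ∧ ∃ j : Fin n, op v j = w}):ℝ)) with hHdef
  have hJex : ∀ v : Fin n, ∃ J : Finset (Fin n), v ∈ H →
      J.card = M ∧ (∀ j₁ ∈ J, ∀ j₂ ∈ J, op v j₁ = op v j₂ → j₁ = j₂) ∧
      ∀ j ∈ J, op v j ≠ v := by
    intro v
    by_cases hv : v ∈ H
    swap
    · exact ⟨∅, fun h => absurd h hv⟩
    have hv' : l ^ 3 < ((Set.ncard {w | w ≠ v ∧ ∃ j : Fin n, op v j = w}):ℝ) :=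
      (Finset.mem_filter.1 hv).2
    set W : Set (Fin n) := {w | w ≠ v ∧ ∃ j : Fin n, op v j = w} with hWdef
    have hWfin : W.Finite := Set.toFinite W
    have hMW : M ≤ hWfin.toFinset.card := by
      rw [← Set.ncard_eq_toFinset_card W hWfin, hMdef]
      refine Nat.ceil_le.2 ?_
      exact hv'.le
    obtain ⟨T, hTsub, hTcard⟩ := Finset.exists_subset_card_eq hMW
    have hTW : ∀ w ∈ T, w ∈ W := fun w hw => (Set.Finite.mem_toFinset hWfin).1 (hTsub hw)
    have hpick : ∀ w : Fin n, w ∈ T → ∃ j : Fin n, op v j = w := fun w hw => (hTW w hw).2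
    choose pk hpk using hpick
    refine ⟨T.attach.image (fun w => pk w.1 w.2), fun _ => ⟨?_, ?_, ?_⟩⟩
    · rw [Finset.card_image_of_injOn, Finset.card_attach, hTcard]
      intro a _ b _ hab
      have hab' : pk a.1 a.2 = pk b.1 b.2 := hab
      have : (a : Fin n) = b := by rw [← hpk a.1 a.2, ← hpk b.1 b.2, hab']
      exact Subtype.ext this
    · intro j₁ h₁ j₂ h₂ heq
      obtain ⟨w₁, _, rfl⟩ := Finset.mem_image.1 h₁
      obtain ⟨w₂, _, rfl⟩ := Finset.mem_image.1 h₂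
      rw [hpk w₁.1 w₁.2, hpk w₂.1 w₂.2] at heq
      have : w₁ = w₂ := Subtype.ext heq
      subst this
      rfl
    · intro j hj
      obtain ⟨w, _, rfl⟩ := Finset.mem_image.1 hj
      rw [hpk w.1 w.2]
      exact (hTW w.1 w.2).1
  choose Jv hJv using hJex
  set P : Finset (Finset (Fin n)) := (univ : Finset (Fin n)).powerset with hPdef
  set wt : Finset (Fin n) → ℝ :=
    fun U => p ^ U.card * q ^ ((univ : Finset (Fin n)).card - U.card) with hwt
  have hwt0 : ∀ U, 0 < wt U := by
    intro U; rw [hwt]; positivity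
  set m : ℝ := 3 / 2 * (n : ℝ) / L with hmdef
  have hm0 : 0 < m := by rw [hmdef]; positivity
  have hE1 : ∑ U ∈ P, wt U * (if m < (U.card:ℝ) then (1:ℝ) else 0) ≤ 2/3 := by
    have hle : ∀ U ∈ P, wt U * (if m < (U.card:ℝ) then (1:ℝ) else 0)
        ≤ wt U * ((U.card:ℝ)/m) := by
      intro U _
      refine mul_le_mul_of_nonneg_left ?_ (hwt0 U).le
      by_cases h : m < (U.card:ℝ)
      · rw [if_pos h, le_div_iff₀ hm0]; linarith
      · rw [if_neg h]; positivity
    refine (Finset.sum_le_sum hle).trans ?_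
    have heq2 : ∑ U ∈ P, wt U * ((U.card:ℝ)/m) = (∑ U ∈ P, wt U * (U.card:ℝ)) / m := by
      rw [Finset.sum_div]; exact Finset.sum_congr rfl fun U _ => by ring
    rw [heq2]
    have heq3 : ∑ U ∈ P, wt U * (U.card:ℝ) = p * n := by
      simp only [hwt, hPdef]
      rw [wsum_card p q hpq]
      rw [Fintype.card_fin]
    rw [heq3, div_le_iff₀ hm0]
    have hmeq : p * (n:ℝ) = 2/3 * m := by
      rw [hmdef, hpdef]
      field_simp
    exact hmeq.le
  have hE2 : ∀ v ∈ H, ∑ U ∈ P, wt U * (if (U ∩ Jv v).card ≤ k then (1:ℝ) else 0)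
      ≤ 2 * 6 ^ k * q ^ (M - k) := by
    intro v hv
    obtain ⟨hJcard, hJinj, hJne⟩ := hJv v hv
    simp only [hwt, hPdef]
    rw [wsum_cond p q hpq (Jv v) (fun A => if A.card ≤ k then (1:ℝ) else 0)]
    have hbt := binom_tail p q hp0.le hq0 hq1 (Jv v) k
      (by rw [hJcard]; exact hkM)
      (by rw [hJcard]; exact h2k)
      (by rw [hJcard]; exact h6)
    rw [hJcard] at hbt
    rw [hJcard]
    exact hbt
  have hnum : (n:ℝ) * (2 * 6 ^ k * q ^ (M - k)) ≤ 1/4 := by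
    have hqe : q ≤ Real.exp (-p) := by
      have := Real.add_one_le_exp (-p)
      rw [hqdef]; linarith
    have hqpow : q ^ (M - k) ≤ Real.exp (-p) ^ (M - k) := pow_le_pow_left₀ hq0.le hqe _
    have hexpq : Real.exp (-p) ^ (M - k) = Real.exp (-(p * ((M:ℝ) - k))) := by
      rw [← Real.exp_nat_mul]
      congr 1
      rw [Nat.cast_sub hkM]; ring
    have h6k : (6:ℝ) ^ k ≤ Real.exp (9/5 * k) := by
      calc (6:ℝ) ^ k ≤ Real.exp (9/5) ^ k := pow_le_pow_left₀ (by norm_num) six_le_exp k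
        _ = Real.exp (9/5 * k) := by rw [← Real.exp_nat_mul]; ring_nf
    have hnexp : (n:ℝ) = Real.exp (Real.log 2 * l) := by
      have h2 : (2:ℝ) ^ l = (n:ℝ) := Real.rpow_logb (by norm_num) (by norm_num) hnR0
      rw [← h2, Real.rpow_def_of_pos (by norm_num)]
    have hlog2 : Real.log 2 ≤ 0.6931471808 := Real.log_two_lt_d9.le
    have hkey : Real.log 2 * l + 9/5 * (k:ℝ) + 3 ≤ p * ((M:ℝ) - k) := by
      have e2 : p * ((M:ℝ) - k) = M * p - p * k := by ring
      have e3 : 9/5 * (k:ℝ) ≤ 9/10 * L := by linarith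
      have e4 : Real.log 2 * l ≤ 0.6931471808 * l :=
        mul_le_mul_of_nonneg_right hlog2 hl0
      linarith [hMp, hpk]
    have hexp3 : Real.exp (-3 : ℝ) ≤ 1/8 := by
      have h2e : (2:ℝ) ≤ Real.exp 1 := by linarith [Real.add_one_le_exp (1:ℝ)]
      have h8 : (8:ℝ) ≤ Real.exp 3 := by
        calc (8:ℝ) = 2 ^ (3:ℕ) := by norm_num
          _ ≤ Real.exp 1 ^ (3:ℕ) := pow_le_pow_left₀ (by norm_num) h2e _
          _ = Real.exp 3 := by rw [← Real.exp_nat_mul]; norm_num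
      rw [Real.exp_neg, inv_le_comm₀ (Real.exp_pos 3) (by norm_num)]
      calc (1/8 : ℝ)⁻¹ = 8 := by norm_num
        _ ≤ Real.exp 3 := h8
    have hqnn : (0:ℝ) ≤ q ^ (M-k) := by positivity
    calc (n:ℝ) * (2 * 6 ^ k * q ^ (M - k))
        ≤ Real.exp (Real.log 2 * l) * (2 * (Real.exp (9/5 * k) * Real.exp (-(p * ((M:ℝ) - k))))) := by
          rw [hnexp]
          refine mul_le_mul_of_nonneg_left ?_ (Real.exp_pos _).le
          have hmm : (6:ℝ) ^ k * q ^ (M-k)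
              ≤ Real.exp (9/5 * k) * Real.exp (-(p * ((M:ℝ) - k))) := by
            refine mul_le_mul h6k (hqpow.trans_eq hexpq) hqnn (Real.exp_pos _).le
          calc 2 * 6 ^ k * q ^ (M-k) = 2 * (6 ^ k * q ^ (M-k)) := by ring
            _ ≤ 2 * (Real.exp (9/5 * k) * Real.exp (-(p * ((M:ℝ) - k)))) := by linarith
      _ = 2 * Real.exp (Real.log 2 * l + 9/5 * k + -(p * ((M:ℝ) - k))) := by
          rw [Real.exp_add, Real.exp_add]; ring
      _ ≤ 2 * Real.exp (-3 : ℝ) := by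
          have := Real.exp_le_exp.2 (show Real.log 2 * l + 9/5 * (k:ℝ) + -(p * ((M:ℝ) - k)) ≤ (-3:ℝ) by linarith [hkey])
          linarith
      _ ≤ 1/4 := by linarith [hexp3]
  have hsum1 : ∑ U ∈ P, wt U = 1 := by
    simp only [hwt, hPdef]
    exact wsum_one p q hpq
  have hHn : (H.card : ℝ) ≤ n := by
    have := Finset.card_le_univ H
    rw [Fintype.card_fin] at this
    exact_mod_cast this
  have htot : ∑ U ∈ P, wt U * ((if m < (U.card:ℝ) then (1:ℝ) else 0)
      + ∑ v ∈ H, (if (U ∩ Jv v).card ≤ k then (1:ℝ) else 0)) < ∑ U ∈ P, wt U := by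
    have hsplit : ∑ U ∈ P, wt U * ((if m < (U.card:ℝ) then (1:ℝ) else 0)
        + ∑ v ∈ H, (if (U ∩ Jv v).card ≤ k then (1:ℝ) else 0))
      = (∑ U ∈ P, wt U * (if m < (U.card:ℝ) then (1:ℝ) else 0))
        + ∑ v ∈ H, ∑ U ∈ P, wt U * (if (U ∩ Jv v).card ≤ k then (1:ℝ) else 0) := by
      have h1 : ∀ U ∈ P, wt U * ((if m < (U.card:ℝ) then (1:ℝ) else 0)
          + ∑ v ∈ H, (if (U ∩ Jv v).card ≤ k then (1:ℝ) else 0))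
        = wt U * (if m < (U.card:ℝ) then (1:ℝ) else 0)
          + ∑ v ∈ H, wt U * (if (U ∩ Jv v).card ≤ k then (1:ℝ) else 0) := by
        intro U _
        rw [mul_add, Finset.mul_sum]
      rw [Finset.sum_congr rfl h1, Finset.sum_add_distrib, Finset.sum_comm]
    rw [hsplit, hsum1]
    have hb2 : ∑ v ∈ H, ∑ U ∈ P, wt U * (if (U ∩ Jv v).card ≤ k then (1:ℝ) else 0)
        ≤ 1/4 := by
      have : ∑ v ∈ H, ∑ U ∈ P, wt U * (if (U ∩ Jv v).card ≤ k then (1:ℝ) else 0)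
          ≤ ∑ _v ∈ H, (2 * 6 ^ k * q ^ (M - k)) := Finset.sum_le_sum hE2
      refine this.trans ?_
      rw [Finset.sum_const, nsmul_eq_mul]
      have hc0 : (0:ℝ) ≤ 2 * 6 ^ k * q ^ (M - k) := by positivity
      calc (H.card : ℝ) * (2 * 6 ^ k * q ^ (M - k))
          ≤ (n:ℝ) * (2 * 6 ^ k * q ^ (M - k)) := mul_le_mul_of_nonneg_right hHn hc0
        _ ≤ 1/4 := hnum
    linarith [hE1, hb2]
  obtain ⟨U₀, hU₀P, hU₀lt⟩ := Finset.exists_lt_of_sum_lt htot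
  have hFlt : (if m < (U₀.card:ℝ) then (1:ℝ) else 0)
      + ∑ v ∈ H, (if (U₀ ∩ Jv v).card ≤ k then (1:ℝ) else 0) < 1 := by
    have hw := hwt0 U₀
    by_contra hcon
    push_neg at hcon
    have := mul_le_mul_of_nonneg_left hcon hw.le
    rw [mul_one] at this
    linarith
  have hind1nn : (0:ℝ) ≤ (if m < (U₀.card:ℝ) then (1:ℝ) else 0) := by positivity
  have hind2nn : ∀ v ∈ H, (0:ℝ) ≤ (if (U₀ ∩ Jv v).card ≤ k then (1:ℝ) else 0) := by
    intro v _; positivity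
  have hcardU₀ : (U₀.card : ℝ) ≤ m := by
    by_contra hcon
    push_neg at hcon
    rw [if_pos hcon] at hFlt
    have : (0:ℝ) ≤ ∑ v ∈ H, (if (U₀ ∩ Jv v).card ≤ k then (1:ℝ) else 0) :=
      Finset.sum_nonneg hind2nn
    linarith
  have hgood : ∀ v ∈ H, k < (U₀ ∩ Jv v).card := by
    intro v hv
    by_contra hcon
    push_neg at hcon
    have hone : (1:ℝ) ≤ ∑ v' ∈ H, (if (U₀ ∩ Jv v').card ≤ k then (1:ℝ) else 0) := by
      have := Finset.single_le_sum hind2nn hv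
      rw [if_pos hcon] at this
      linarith
    linarith
  have part2 : ∀ v ∈ H,
      L / 2 < ((Set.ncard {w | w ≠ v ∧ ∃ j ∈ (↑U₀ : Set (Fin n)), op v j = w}):ℝ) := by
    intro v hv
    obtain ⟨hJcard, hJinj, hJne⟩ := hJv v hv
    have hcnt := hgood v hv
    have hEcard : ((U₀ ∩ Jv v).image (op v)).card = (U₀ ∩ Jv v).card := by
      refine Finset.card_image_of_injOn ?_
      intro a ha b hb hab
      rw [Finset.mem_coe, Finset.mem_inter] at ha hb
      exact hJinj a ha.2 b hb.2 hab
    have hEsub : (↑((U₀ ∩ Jv v).image (op v)) : Set (Fin n))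
        ⊆ {w | w ≠ v ∧ ∃ j ∈ (↑U₀ : Set (Fin n)), op v j = w} := by
      intro w hw
      rw [Finset.mem_coe, Finset.mem_image] at hw
      obtain ⟨j, hj, rfl⟩ := hw
      rw [Finset.mem_inter] at hj
      exact ⟨hJne j hj.2, j, hj.1, rfl⟩
    have hmono := Set.ncard_le_ncard hEsub (Set.toFinite _)
    rw [Set.ncard_coe_finset, hEcard] at hmono
    have hc : (k:ℝ) + 1 ≤ ((U₀ ∩ Jv v).card : ℝ) := by exact_mod_cast hcnt
    have hc2 : ((U₀ ∩ Jv v).card : ℝ)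
        ≤ ((Set.ncard {w | w ≠ v ∧ ∃ j ∈ (↑U₀ : Set (Fin n)), op v j = w}):ℝ) := by
      exact_mod_cast hmono
    linarith [hkgt]
  refine ⟨(↑U₀ : Set (Fin n)), ?_, ?_, ?_⟩
  · rw [Set.ncard_coe_finset]
    exact hcardU₀
  · intro v hv
    exact part2 v (Finset.mem_filter.2 ⟨Finset.mem_univ v, hv⟩)
  · have hdeg : ∀ a ∈ {v : Fin n | l ^ 3 <
        ((Set.ncard {w | w ≠ v ∧ ∃ j : Fin n, op v j = w}):ℝ)},
        k + 1 ≤ ({b | Relation.EqvGen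
          (fun x y => x ≠ y ∧ ∃ j ∈ (↑U₀ : Set (Fin n)), op x j = y) a b}).ncard := by
      intro a ha
      have h2 := part2 a (Finset.mem_filter.2 ⟨Finset.mem_univ a, ha⟩)
      have hsub : {w | w ≠ a ∧ ∃ j ∈ (↑U₀ : Set (Fin n)), op a j = w}
          ⊆ {b | Relation.EqvGen
            (fun x y => x ≠ y ∧ ∃ j ∈ (↑U₀ : Set (Fin n)), op x j = y) a b} := by
        intro w hw
        exact Relation.EqvGen.rel _ _ ⟨Ne.symm hw.1, hw.2⟩
      have hmono := Set.ncard_le_ncard hsub (Set.toFinite _)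
      have hklt : (k:ℝ) < ((Set.ncard {w | w ≠ a ∧ ∃ j ∈ (↑U₀ : Set (Fin n)), op a j = w}):ℝ) := by
        linarith [hkle]
      have : k < Set.ncard {w | w ≠ a ∧ ∃ j ∈ (↑U₀ : Set (Fin n)), op a j = w} := by
        exact_mod_cast hklt
      omega
    have hcc := comp_count
      (fun x y => x ≠ y ∧ ∃ j ∈ (↑U₀ : Set (Fin n)), op x j = y)
      {v : Fin n | l ^ 3 < ((Set.ncard {w | w ≠ v ∧ ∃ j : Fin n, op v j = w}):ℝ)}
      k hdeg
    rw [Fintype.card_fin] at hcc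
    have hccR : (({C : Set (Fin n) |
        (∃ a, C = {b | Relation.EqvGen
          (fun x y => x ≠ y ∧ ∃ j ∈ (↑U₀ : Set (Fin n)), op x j = y) a b}) ∧
        C ⊆ {v : Fin n | l ^ 3 <
          ((Set.ncard {w | w ≠ v ∧ ∃ j : Fin n, op v j = w}):ℝ)}}).ncard : ℝ)
        * ((k:ℝ) + 1) ≤ (n:ℝ) := by
      exact_mod_cast hcc
    rw [le_div_iff₀ hL0]
    set c : ℝ := (({C : Set (Fin n) |
        (∃ a, C = {b | Relation.EqvGen
          (fun x y => x ≠ y ∧ ∃ j ∈ (↑U₀ : Set (Fin n)), op x j = y) a b}) ∧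
        C ⊆ {v : Fin n | l ^ 3 <
          ((Set.ncard {w | w ≠ v ∧ ∃ j : Fin n, op v j = w}):ℝ)}}).ncard : ℝ) with hcdef
    have hc0 : (0:ℝ) ≤ c := by rw [hcdef]; positivity
    nlinarith [hkgt, hccR]
end

section
/- Let X be a finite set and let (X, ▷) and (X, ▷') be racks with associated permutations (f_l)_{l ∈ X} and (f'_l)_{l ∈ X} respectively. Let T ⊆ X and set T⁺ := T ∪ {w ∈ X : ∃ i ∈ T, ∃ l ∈ X, f_l(i) = w ∧ w ≠ i}. Suppose that: (i) f_l(i) = f'_l(i) for every l ∈ X and every i ∈ T; (ii) f_i = f'_i for every i ∈ T⁺; and (iii) C ⊆ X is a component of the graph G_T (an equivalence class of the equivalence relation generated by r_T(a, b) := a ≠ b ∧ ∃ i ∈ T, f_i(a) = b), v ∈ C, and j ∈ X satisfies f_j(v) = f'_j(v). Then f_j(u) = f'_j(u) for every u ∈ C. -/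
/-- Let `op` and `op'` be two rack operations on a finite set `X`, with
associated maps `f_l = (· ▷ l)` and `f'_l`. Let `T ⊆ X` and let
`T⁺ = T ∪ {w | ∃ i ∈ T, ∃ l, f_l i = w ∧ w ≠ i}`. Suppose the two racks agree
on `T` (as arguments: `f_l i = f'_l i` for `l ∈ X`, `i ∈ T`), agree on all maps
indexed by `T⁺`, and that `C` is a component of `G_T`, `v ∈ C` and `j ∈ X`
with `f_j v = f'_j v`. Then `f_j u = f'_j u` for every `u ∈ C`. -/
theorem statement16 {X : Type*} [Finite X]
    (op op' : X → X → X) (hrack : IsRack op) (hrack' : IsRack op')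
    (T : Set X)
    (Tplus : Set X)
    (hTplus : Tplus = T ∪ {w | ∃ i ∈ T, ∃ l : X, op i l = w ∧ w ≠ i})
    (h1 : ∀ l : X, ∀ i ∈ T, op i l = op' i l)
    (h2 : ∀ i ∈ Tplus, ∀ x : X, op x i = op' x i)
    (C : Set X)
    (hC : ∃ a, C = {b | Relation.EqvGen (fun x y => x ≠ y ∧ ∃ i ∈ T, op x i = y) a b})
    (v : X) (hv : v ∈ C) (j : X) (hvj : op v j = op' v j) :
    ∀ u ∈ C, op u j = op' u j := by
  obtain ⟨a, rfl⟩ := hC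
  have hTsub : T ⊆ Tplus := by rw [hTplus]; exact Set.subset_union_left
  have key : ∀ x y : X, (x ≠ y ∧ ∃ i ∈ T, op x i = y) →
      (op x j = op' x j ↔ op y j = op' y j) := by
    rintro x y ⟨-, i, hi, rfl⟩
    set m := op i j with hm
    have hmT : m ∈ Tplus := by
      rw [hTplus]
      by_cases h : m = i
      · exact Or.inl (h ▸ hi)
      · exact Or.inr ⟨i, hi, j, rfl, h⟩
    have e1 : op (op x i) j = op (op x j) m := hrack.2 x i j
    have e2 : op' (op x i) j = op' (op' x j) m := by
      rw [h2 i (hTsub hi) x, hrack'.2, ← h1 j i hi]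
    have e3 : ∀ z : X, op z m = op' z m := h2 m hmT
    constructor
    · intro h
      rw [e1, h, e3, e2]
    · intro h
      have hinj : Function.Injective (fun z => op z m) := (hrack.1 m).1
      have : op (op x j) m = op (op' x j) m := by
        rw [← e1, h, e2, e3]
      exact hinj this
  have hEq : ∀ x y : X, Relation.EqvGen (fun x y => x ≠ y ∧ ∃ i ∈ T, op x i = y) x y →
      (op x j = op' x j ↔ op y j = op' y j) := by
    intro x y h
    induction h with
    | rel x y h => exact key x y h
    | refl x => exact Iff.rfl
    | symm x y _ ih => exact ih.symm
    | trans x y z _ _ ih1 ih2 => exact ih1.trans ih2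
  intro u hu
  exact (hEq a u hu).mp ((hEq a v hv).mpr hvj)
end

section
/- Let n be a positive integer and let (η_q)_{q=1}^{n} be nonnegative integers with ∑_{q=1}^{n} η_q = n. Then, as real numbers, (∑_{p=1}^{n} η_p/p) · (∑_{q=1}^{n} (log₂ q)·η_q/q) ≤ n²/4. -/
lemma aux_logb_le (q : ℕ) (hq : 1 ≤ q) : Real.logb 2 q ≤ (q : ℝ) - 1 := by
  have h1 : q ≤ 2 ^ (q - 1) := by
    have := Nat.lt_two_pow_self (n := q - 1)
    omega
  have hq0 : (0 : ℝ) < q := by exact_mod_cast hq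
  rw [Real.logb_le_iff_le_rpow one_lt_two hq0]
  calc (q : ℝ) ≤ ((2 ^ (q - 1) : ℕ) : ℝ) := by exact_mod_cast h1
    _ = (2 : ℝ) ^ ((q : ℝ) - 1) := by
        push_cast
        rw [← Real.rpow_natCast 2 (q - 1)]
        congr 1
        have : (1 : ℕ) ≤ q := hq
        push_cast [Nat.cast_sub this]
        ring

/-- If `(η_q)_{q=1}^n` are nonnegative integers summing to `n`, then
`(∑ η_p / p) · (∑ (log₂ q) η_q / q) ≤ n² / 4`. -/
theorem statement17 (n : ℕ) (hn : 0 < n) (η : ℕ → ℕ)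
    (hsum : ∑ q ∈ Finset.Icc 1 n, η q = n) :
    (∑ p ∈ Finset.Icc 1 n, (η p : ℝ) / p) *
        (∑ q ∈ Finset.Icc 1 n, Real.logb 2 q * (η q : ℝ) / q) ≤
      (n : ℝ) ^ 2 / 4 := by
  set A := ∑ p ∈ Finset.Icc 1 n, (η p : ℝ) / p with hA
  set B := ∑ q ∈ Finset.Icc 1 n, Real.logb 2 q * (η q : ℝ) / q with hB
  have hA0 : 0 ≤ A := Finset.sum_nonneg fun p _ => by positivity
  have hB0 : 0 ≤ B := Finset.sum_nonneg fun q hq => by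
    have h1 : 1 ≤ q := (Finset.mem_Icc.mp hq).1
    have : 0 ≤ Real.logb 2 q := Real.logb_nonneg one_lt_two (by exact_mod_cast h1)
    positivity
  have hAB : A + B ≤ n := by
    rw [hA, hB, ← Finset.sum_add_distrib]
    have : (n : ℝ) = ∑ q ∈ Finset.Icc 1 n, (η q : ℝ) := by
      rw [← Nat.cast_sum]; exact_mod_cast hsum.symm
    rw [this]
    apply Finset.sum_le_sum
    intro q hq
    have h1 : 1 ≤ q := (Finset.mem_Icc.mp hq).1
    have hq0 : (0 : ℝ) < q := by exact_mod_cast h1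
    have hlog := aux_logb_le q h1
    rw [← add_div, div_le_iff₀ hq0]
    have hη : (0 : ℝ) ≤ η q := Nat.cast_nonneg _
    nlinarith
  nlinarith [sq_nonneg (A - B)]
end
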